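/- arXiv:2208.00342 — 8 statements merged into one kernel-verified Lean document; each statement's English description precedes it below -/
import Mathlib

section
/- Suppose τ : X → X is a non-singular measurable transformation with μ(τ^{-1}(A)) ≤ M·μ(A) for every measurable set A, where M > 0. Then the composition operator C_τ g = g ∘ τ is bounded on the Lorentz space L^{pq}(X) with ‖C_τ g‖_{pq} ≤ M^{1/p} ‖g‖_{pq} for all g ∈ L^{pq}(X), for 1 < p < ∞ and 1 ≤ q ≤ ∞. -/
open MeasureTheory Filter Set
open scoped ENNReal NNReal

/-- Decreasing rearrangement `g*(t)` of a measurable function. -/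
noncomputable def rearr {X : Type*} [MeasurableSpace X] (μ : Measure X) (g : X → ℂ)
    (t : ℝ) : ℝ≥0∞ :=
  sInf {l : ℝ≥0∞ | μ {x | l < (‖g x‖₊ : ℝ≥0∞)} ≤ ENNReal.ofReal t}

/-- Maximal function `g**(t) = (1/t) ∫_0^t g*(s) ds`. -/
noncomputable def maxFun {X : Type*} [MeasurableSpace X] (μ : Measure X) (g : X → ℂ)
    (t : ℝ) : ℝ≥0∞ :=
  (ENNReal.ofReal t)⁻¹ * ∫⁻ s in Set.Ioc (0:ℝ) t, rearr μ g s

/-- `‖g‖_{pq}^q = (q/p) ∫_0^∞ (t^{1/p} g**(t))^q dt/t`. -/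
noncomputable def lorentzQ {X : Type*} [MeasurableSpace X] (μ : Measure X) (g : X → ℂ)
    (p q : ℝ) : ℝ≥0∞ :=
  ENNReal.ofReal (q / p) *
    ∫⁻ t in Set.Ioi (0:ℝ), (ENNReal.ofReal (t ^ (1/p)) * maxFun μ g t) ^ q / ENNReal.ofReal t

/-- The Lorentz norm `‖g‖_{pq}` for `q < ∞`. -/
noncomputable def lorentzNorm {X : Type*} [MeasurableSpace X] (μ : Measure X) (g : X → ℂ)
    (p q : ℝ) : ℝ≥0∞ :=
  lorentzQ μ g p q ^ (1 / q)

/-- The Lorentz norm `‖g‖_{p∞} = sup_{t>0} t^{1/p} g**(t)`. -/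
noncomputable def lorentzSup {X : Type*} [MeasurableSpace X] (μ : Measure X) (g : X → ℂ)
    (p : ℝ) : ℝ≥0∞ :=
  ⨆ (t : ℝ) (_ : 0 < t), ENNReal.ofReal (t ^ (1/p)) * maxFun μ g t

/-- A non-singular measurable transformation. -/
def Nonsingular {X : Type*} [MeasurableSpace X] (μ : Measure X) (τ : X → X) : Prop :=
  Measurable τ ∧ ∀ A : Set X, MeasurableSet A → μ A = 0 → μ (τ ⁻¹' A) = 0

/-- Change of variables `x ↦ c * x` for lower Lebesgue integrals. -/
lemma cov_lemma (c : ℝ) (hc : 0 < c) (f : ℝ → ℝ≥0∞) (s : Set ℝ) (hs : MeasurableSet s) :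
    ∫⁻ x in s, f x = ENNReal.ofReal c * ∫⁻ u in (fun u => c * u) ⁻¹' s, f (c * u) := by
  have hc' : c ≠ 0 := hc.ne'
  let e : ℝ ≃ᵐ ℝ := (Homeomorph.mulLeft₀ c hc').toMeasurableEquiv
  have he : (e : ℝ → ℝ) = fun x => c * x := rfl
  have h1 : ∫⁻ u in (fun u => c * u) ⁻¹' s, f (c * u)
      = ∫⁻ x, f x ∂(Measure.map e (volume.restrict (e ⁻¹' s))) :=
    (MeasureTheory.lintegral_map_equiv f e).symm
  have h2 : Measure.map e (volume.restrict (e ⁻¹' s)) = (Measure.map e volume).restrict s :=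
    (Measure.restrict_map e.measurable hs).symm
  have h3 : Measure.map e volume = ENNReal.ofReal |c⁻¹| • volume := by
    rw [show Measure.map e volume = Measure.map (c * ·) volume from rfl]
    exact Real.map_volume_mul_left hc'
  rw [h1, h2, h3, Measure.restrict_smul, lintegral_smul_measure,
    abs_of_pos (inv_pos.mpr hc), smul_eq_mul, ← mul_assoc, ← ENNReal.ofReal_mul hc.le,
    mul_inv_cancel₀ hc', ENNReal.ofReal_one, one_mul]

lemma maxFun_nonpos {X : Type*} [MeasurableSpace X] (μ : Measure X) (g : X → ℂ)
    {t : ℝ} (ht : t ≤ 0) : maxFun μ g t = 0 := by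
  unfold maxFun
  rw [Set.Ioc_eq_empty (by simpa using not_lt.mpr ht), Measure.restrict_empty,
    lintegral_zero_measure, mul_zero]

/-- under `μ(τ⁻¹ A) ≤ M μ(A)`, `C_τ` is bounded on `L^{pq}` with
`‖C_τ g‖_{pq} ≤ M^{1/p} ‖g‖_{pq}`, for `1 < p < ∞` and `1 ≤ q ≤ ∞`
(the case `q = ∞` is stated with the `L^{p∞}` norm). -/
theorem stmt_4 {X : Type*} [MeasurableSpace X] (μ : Measure X) (τ : X → X)
    (hτ : Measurable τ)
    (hns : ∀ A : Set X, MeasurableSet A → μ A = 0 → μ (τ ⁻¹' A) = 0)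
    (M : ℝ) (hM : 0 < M)
    (hbd : ∀ A : Set X, MeasurableSet A → μ (τ ⁻¹' A) ≤ ENNReal.ofReal M * μ A)
    (p : ℝ) (hp : 1 < p) :
    (∀ q : ℝ, 1 ≤ q → ∀ g : X → ℂ, Measurable g → lorentzNorm μ g p q < ⊤ →
      lorentzNorm μ (g ∘ τ) p q ≤ ENNReal.ofReal (M ^ (1/p)) * lorentzNorm μ g p q) ∧
    (∀ g : X → ℂ, Measurable g → lorentzSup μ g p < ⊤ →
      lorentzSup μ (g ∘ τ) p ≤ ENNReal.ofReal (M ^ (1/p)) * lorentzSup μ g p) := by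
  have hM' : M ≠ 0 := hM.ne'
  -- key pointwise bound on rearrangements
  have hrearr : ∀ (g : X → ℂ), Measurable g → ∀ s : ℝ,
      rearr μ (g ∘ τ) s ≤ rearr μ g (s / M) := by
    intro g hg s
    apply sInf_le_sInf
    intro l hl
    simp only [Set.mem_setOf_eq] at hl ⊢
    have hA : MeasurableSet {x | l < (‖g x‖₊ : ℝ≥0∞)} :=
      measurableSet_lt measurable_const (hg.nnnorm.coe_nnreal_ennreal)
    have : {x | l < (‖(g ∘ τ) x‖₊ : ℝ≥0∞)} = τ ⁻¹' {x | l < (‖g x‖₊ : ℝ≥0∞)} := rfl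
    rw [this]
    calc μ (τ ⁻¹' {x | l < (‖g x‖₊ : ℝ≥0∞)}) ≤ ENNReal.ofReal M * μ {x | l < (‖g x‖₊ : ℝ≥0∞)} :=
          hbd _ hA
      _ ≤ ENNReal.ofReal M * ENNReal.ofReal (s / M) := by gcongr
      _ = ENNReal.ofReal (M * (s / M)) := (ENNReal.ofReal_mul hM.le).symm
      _ = ENNReal.ofReal s := by rw [mul_div_cancel₀ s hM']
  -- maximal function bound
  have hmax : ∀ (g : X → ℂ), Measurable g → ∀ t : ℝ,
      maxFun μ (g ∘ τ) t ≤ maxFun μ g (t / M) := by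
    intro g hg t
    rcases le_or_gt t 0 with ht | ht
    · rw [maxFun_nonpos μ _ ht]; exact zero_le
    · unfold maxFun
      have step1 : (∫⁻ s in Set.Ioc (0:ℝ) t, rearr μ (g ∘ τ) s)
          ≤ ∫⁻ s in Set.Ioc (0:ℝ) t, rearr μ g (s / M) :=
        lintegral_mono fun s => hrearr g hg s
      have hpre : (fun u => M * u) ⁻¹' Set.Ioc (0:ℝ) t = Set.Ioc (0:ℝ) (t / M) := by
        ext u
        simp only [Set.mem_preimage, Set.mem_Ioc]
        rw [mul_pos_iff_of_pos_left hM, le_div_iff₀' hM]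
      have step2 : (∫⁻ s in Set.Ioc (0:ℝ) t, rearr μ g (s / M))
          = ENNReal.ofReal M * ∫⁻ u in Set.Ioc (0:ℝ) (t / M), rearr μ g u := by
        rw [cov_lemma M hM (fun s => rearr μ g (s / M)) _ measurableSet_Ioc, hpre]
        congr 1
        apply lintegral_congr
        intro u
        rw [mul_div_cancel_left₀ u hM']
      calc (ENNReal.ofReal t)⁻¹ * ∫⁻ s in Set.Ioc (0:ℝ) t, rearr μ (g ∘ τ) s
          ≤ (ENNReal.ofReal t)⁻¹ * ∫⁻ s in Set.Ioc (0:ℝ) t, rearr μ g (s / M) := by gcongr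
        _ = (ENNReal.ofReal t)⁻¹ * (ENNReal.ofReal M
              * ∫⁻ u in Set.Ioc (0:ℝ) (t / M), rearr μ g u) := by rw [step2]
        _ = (ENNReal.ofReal (t / M))⁻¹ * ∫⁻ u in Set.Ioc (0:ℝ) (t / M), rearr μ g u := by
            rw [ENNReal.ofReal_div_of_pos hM, ENNReal.inv_div (Or.inr ENNReal.ofReal_ne_top)
              (Or.inr (ENNReal.ofReal_pos.mpr ht).ne')]
            rw [ENNReal.div_eq_inv_mul]; ring
  -- scaled pointwise bound
  have hpt : ∀ (g : X → ℂ), Measurable g → ∀ t : ℝ, 0 < t →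
      ENNReal.ofReal (t ^ (1/p)) * maxFun μ (g ∘ τ) t
        ≤ ENNReal.ofReal (M ^ (1/p)) *
          (ENNReal.ofReal ((t / M) ^ (1/p)) * maxFun μ g (t / M)) := by
    intro g hg t ht
    have hsplit : t ^ (1/p) = M ^ (1/p) * (t / M) ^ (1/p) := by
      rw [← Real.mul_rpow hM.le (div_nonneg ht.le hM.le), mul_div_cancel₀ t hM']
    calc ENNReal.ofReal (t ^ (1/p)) * maxFun μ (g ∘ τ) t
        ≤ ENNReal.ofReal (t ^ (1/p)) * maxFun μ g (t / M) := by
          exact mul_le_mul_right (hmax g hg t) _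
      _ = ENNReal.ofReal (M ^ (1/p)) *
          (ENNReal.ofReal ((t / M) ^ (1/p)) * maxFun μ g (t / M)) := by
          rw [hsplit, ENNReal.ofReal_mul (Real.rpow_nonneg hM.le _), mul_assoc]
  constructor
  · -- the case q < ∞
    intro q hq g hg _
    have hq0 : (0:ℝ) < q := lt_of_lt_of_le one_pos hq
    have hc_ne_top : ENNReal.ofReal (M ^ (1/p)) ^ q ≠ ⊤ :=
      ENNReal.rpow_ne_top_of_nonneg hq0.le ENNReal.ofReal_ne_top
    set c : ℝ≥0∞ := ENNReal.ofReal (M ^ (1/p)) with hc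
    -- ψ u = (u^{1/p} g**(u))^q
    set ψ : ℝ → ℝ≥0∞ := fun u => (ENNReal.ofReal (u ^ (1/p)) * maxFun μ g u) ^ q with hψ
    have hψ_zero : ∀ u : ℝ, u ≤ 0 → ψ u = 0 := by
      intro u hu
      simp [hψ, maxFun_nonpos μ g hu, ENNReal.zero_rpow_of_pos hq0]
    -- pointwise bound on the integrand
    have hint : ∀ t : ℝ,
        (ENNReal.ofReal (t ^ (1/p)) * maxFun μ (g ∘ τ) t) ^ q / ENNReal.ofReal t
          ≤ c ^ q * (ψ (t / M) / ENNReal.ofReal t) := by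
      intro t
      rcases le_or_gt t 0 with ht | ht
      · simp [maxFun_nonpos μ (g ∘ τ) ht, ENNReal.zero_rpow_of_pos hq0]
      · calc (ENNReal.ofReal (t ^ (1/p)) * maxFun μ (g ∘ τ) t) ^ q / ENNReal.ofReal t
            ≤ (c * (ENNReal.ofReal ((t / M) ^ (1/p)) * maxFun μ g (t / M))) ^ q
                / ENNReal.ofReal t := by
              exact ENNReal.div_le_div_right
                (ENNReal.rpow_le_rpow (hpt g hg t ht) hq0.le) _
          _ = c ^ q * (ψ (t / M) / ENNReal.ofReal t) := by
              rw [ENNReal.mul_rpow_of_nonneg _ _ hq0.le, mul_div_assoc]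
    -- change of variables in the integral
    have hpre : (fun u => M * u) ⁻¹' Set.Ioi (0:ℝ) = Set.Ioi (0:ℝ) := by
      ext u
      simp only [Set.mem_preimage, Set.mem_Ioi]
      exact mul_pos_iff_of_pos_left hM
    have hcov : (∫⁻ t in Set.Ioi (0:ℝ), ψ (t / M) / ENNReal.ofReal t)
        = ∫⁻ u in Set.Ioi (0:ℝ), ψ u / ENNReal.ofReal u := by
      rw [cov_lemma M hM (fun t => ψ (t / M) / ENNReal.ofReal t) _ measurableSet_Ioi, hpre,
        ← lintegral_const_mul' _ _ ENNReal.ofReal_ne_top]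
      apply lintegral_congr
      intro u
      rcases le_or_gt u 0 with hu | hu
      · simp [hψ_zero u hu, hψ_zero (M * u / M) (by rw [mul_div_cancel_left₀ u hM']; exact hu)]
      · rw [mul_div_cancel_left₀ u hM', ENNReal.ofReal_mul hM.le, ← mul_div_assoc,
          ENNReal.mul_div_mul_left _ _ (ENNReal.ofReal_pos.mpr hM).ne' ENNReal.ofReal_ne_top]
    -- conclude the bound on lorentzQ
    have key : lorentzQ μ (g ∘ τ) p q ≤ c ^ q * lorentzQ μ g p q := by
      unfold lorentzQ
      calc ENNReal.ofReal (q / p) *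
            ∫⁻ t in Set.Ioi (0:ℝ),
              (ENNReal.ofReal (t ^ (1/p)) * maxFun μ (g ∘ τ) t) ^ q / ENNReal.ofReal t
          ≤ ENNReal.ofReal (q / p) *
              ∫⁻ t in Set.Ioi (0:ℝ), c ^ q * (ψ (t / M) / ENNReal.ofReal t) := by
            exact mul_le_mul_right (lintegral_mono hint) _
        _ = ENNReal.ofReal (q / p) *
              (c ^ q * ∫⁻ t in Set.Ioi (0:ℝ), ψ (t / M) / ENNReal.ofReal t) := by
            rw [lintegral_const_mul' _ _ hc_ne_top]
        _ = c ^ q * (ENNReal.ofReal (q / p) *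
              ∫⁻ u in Set.Ioi (0:ℝ), ψ u / ENNReal.ofReal u) := by
            rw [hcov]; ring
    calc lorentzNorm μ (g ∘ τ) p q = lorentzQ μ (g ∘ τ) p q ^ (1 / q) := rfl
      _ ≤ (c ^ q * lorentzQ μ g p q) ^ (1 / q) :=
          ENNReal.rpow_le_rpow key (by positivity)
      _ = (c ^ q) ^ (1 / q) * lorentzQ μ g p q ^ (1 / q) :=
          ENNReal.mul_rpow_of_nonneg _ _ (by positivity)
      _ = c * lorentzNorm μ g p q := by
          rw [← ENNReal.rpow_mul, mul_one_div_cancel hq0.ne', ENNReal.rpow_one]; rfl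
  · -- the case q = ∞
    intro g hg _
    unfold lorentzSup
    refine iSup₂_le fun t ht => ?_
    calc ENNReal.ofReal (t ^ (1/p)) * maxFun μ (g ∘ τ) t
        ≤ ENNReal.ofReal (M ^ (1/p)) *
            (ENNReal.ofReal ((t / M) ^ (1/p)) * maxFun μ g (t / M)) := hpt g hg t ht
      _ ≤ ENNReal.ofReal (M ^ (1/p)) *
            ⨆ (u : ℝ) (_ : 0 < u), ENNReal.ofReal (u ^ (1/p)) * maxFun μ g u :=
          mul_le_mul_right (le_iSup₂_of_le
            (f := fun (u : ℝ) (_ : 0 < u) => ENNReal.ofReal (u ^ (1/p)) * maxFun μ g u)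
            (t / M) (div_pos ht hM) le_rfl) _
end

section
/- A bounded operator T on a Banach space X is positively expansive (for every x with ‖x‖ = 1 there exists n ∈ ℕ with ‖T^n x‖ ≥ 2) if and only if sup_{n∈ℕ} ‖T^n x‖ = ∞ for every nonzero x ∈ X. -/
open Filter
open scoped ENNReal NNReal

/-- `T` is positively expansive iff `sup_n ‖T^n x‖ = ∞` for every `x ≠ 0`. -/
theorem stmt_10 {X : Type*} [NormedAddCommGroup X] [NormedSpace ℝ X] [CompleteSpace X]
    (T : X →L[ℝ] X) :
    (∀ x : X, ‖x‖ = 1 → ∃ n : ℕ, 2 ≤ ‖(T ^ n) x‖) ↔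
      ∀ x : X, x ≠ 0 → (⨆ n : ℕ, (‖(T ^ n) x‖₊ : ℝ≥0∞)) = ⊤ := by
  constructor
  · intro h x hx
    have key : ∀ k : ℕ, ∃ n : ℕ, 2 ^ k * ‖x‖ ≤ ‖(T ^ n) x‖ := by
      intro k
      induction k with
      | zero => exact ⟨0, by simp⟩
      | succ k ih =>
        obtain ⟨n, hn⟩ := ih
        have hxpos : (0:ℝ) < ‖x‖ := norm_pos_iff.mpr hx
        have hzpos : (0:ℝ) < ‖(T ^ n) x‖ := lt_of_lt_of_le (by positivity) hn
        have hz : (T ^ n) x ≠ 0 := norm_pos_iff.mp hzpos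
        obtain ⟨m, hm⟩ := h (‖(T ^ n) x‖⁻¹ • (T ^ n) x) (norm_smul_inv_norm hz)
        rw [map_smul, norm_smul, norm_inv, norm_norm] at hm
        refine ⟨m + n, ?_⟩
        have hsplit : (T ^ (m + n)) x = (T ^ m) ((T ^ n) x) := by
          rw [pow_add]; rfl
        rw [hsplit]
        have h2 : 2 * ‖(T ^ n) x‖ ≤ ‖(T ^ m) ((T ^ n) x)‖ := by
          have h1 := inv_mul_cancel₀ (ne_of_gt hzpos)
          nlinarith [mul_le_mul_of_nonneg_right hm hzpos.le]
        calc 2 ^ (k + 1) * ‖x‖ = 2 * (2 ^ k * ‖x‖) := by ring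
          _ ≤ 2 * ‖(T ^ n) x‖ := by linarith
          _ ≤ _ := h2
    rw [iSup_eq_top]
    intro b hb
    lift b to ℝ≥0 using hb.ne
    have hxpos : (0:ℝ) < ‖x‖ := norm_pos_iff.mpr hx
    obtain ⟨k, hk⟩ := pow_unbounded_of_one_lt ((b : ℝ) / ‖x‖) (one_lt_two (α := ℝ))
    obtain ⟨n, hn⟩ := key k
    refine ⟨n, ?_⟩
    rw [ENNReal.coe_lt_coe, ← NNReal.coe_lt_coe, coe_nnnorm]
    have : (b : ℝ) < 2 ^ k * ‖x‖ := by
      rw [div_lt_iff₀ hxpos] at hk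
      linarith
    linarith
  · intro h x hx
    have hx0 : x ≠ 0 := by
      intro h0; rw [h0, norm_zero] at hx; norm_num at hx
    by_contra hc
    push_neg at hc
    have hb : (⨆ n : ℕ, (‖(T ^ n) x‖₊ : ℝ≥0∞)) ≤ 2 := by
      refine iSup_le fun n => ?_
      have := (hc n).le
      have h2 : ‖(T ^ n) x‖₊ ≤ (2 : ℝ≥0) := by
        rw [← NNReal.coe_le_coe, coe_nnnorm]; exact_mod_cast this
      exact_mod_cast ENNReal.coe_le_coe.mpr h2
    rw [h x hx0] at hb
    exact (lt_irrefl _ (lt_of_le_of_lt hb (by norm_num))).elim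
end

section
/- A bounded operator T on a Banach space X is uniformly positively expansive (there exists n ∈ ℕ such that ‖T^n x‖ ≥ 2 for all x with ‖x‖ = 1) if and only if lim_{n→∞} ‖T^n x‖ = ∞ uniformly on the unit sphere S_X. -/
open Filter
open scoped ENNReal NNReal

/-- `T` is uniformly positively expansive iff `‖T^n x‖ → ∞`
uniformly on the unit sphere. -/
theorem stmt_11 {X : Type*} [NormedAddCommGroup X] [NormedSpace ℝ X] [CompleteSpace X]
    (T : X →L[ℝ] X) :
    (∃ n : ℕ, ∀ x : X, ‖x‖ = 1 → 2 ≤ ‖(T ^ n) x‖) ↔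
      ∀ M : ℝ, 0 < M → ∃ N : ℕ, ∀ n ≥ N, ∀ x : X, ‖x‖ = 1 → M ≤ ‖(T ^ n) x‖ := by
  constructor
  · rintro ⟨n, hn⟩ M hM
    -- handle the case where the sphere is empty
    by_cases hx0 : ∃ x : X, ‖x‖ = 1
    · obtain ⟨x₀, hx₀⟩ := hx0
      have hnpos : 0 < n := by
        rcases Nat.eq_zero_or_pos n with h | h
        · exfalso
          have := hn x₀ hx₀
          rw [h] at this
          simp [hx₀] at this
        · exact h
      -- scale-invariant version
      have h2 : ∀ x : X, 2 * ‖x‖ ≤ ‖(T ^ n) x‖ := by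
        intro x
        rcases eq_or_ne x 0 with rfl | hx
        · simp
        · have hxn : ‖x‖ ≠ 0 := norm_ne_zero_iff.mpr hx
          have hux : ‖‖x‖⁻¹ • x‖ = 1 := by
            rw [norm_smul, norm_inv, norm_norm, inv_mul_cancel₀ hxn]
          have := hn _ hux
          rw [map_smul, norm_smul, norm_inv, norm_norm] at this
          have hxpos : 0 < ‖x‖ := (norm_pos_iff).mpr hx
          calc 2 * ‖x‖ ≤ (‖x‖⁻¹ * ‖(T ^ n) x‖) * ‖x‖ := by
                exact mul_le_mul_of_nonneg_right this (le_of_lt hxpos)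
            _ = ‖(T ^ n) x‖ := by field_simp
      -- iterate
      have hpow : ∀ k : ℕ, ∀ x : X, 2 ^ k * ‖x‖ ≤ ‖(T ^ (n * k)) x‖ := by
        intro k
        induction k with
        | zero => intro x; simp
        | succ k ih =>
          intro x
          have heq : T ^ (n * (k + 1)) = T ^ (n * k) * T ^ n := by
            rw [← pow_add]; ring_nf
          rw [heq]
          have h1 := ih ((T ^ n) x)
          have h2x := h2 x
          have : 2 ^ k * (2 * ‖x‖) ≤ 2 ^ k * ‖(T ^ n) x‖ :=
            mul_le_mul_of_nonneg_left h2x (by positivity)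
          calc 2 ^ (k + 1) * ‖x‖ = 2 ^ k * (2 * ‖x‖) := by ring
            _ ≤ 2 ^ k * ‖(T ^ n) x‖ := this
            _ ≤ ‖(T ^ (n * k)) ((T ^ n) x)‖ := h1
            _ = ‖(T ^ (n * k) * T ^ n) x‖ := rfl
      -- the constant C
      set C : ℝ := ∑ j ∈ Finset.range (n + 1), ‖T ^ j‖ with hC
      have hCle : ∀ j ≤ n, ‖T ^ j‖ ≤ C := by
        intro j hj
        exact Finset.single_le_sum (f := fun j => ‖T ^ j‖)
          (fun i _ => norm_nonneg _) (Finset.mem_range.mpr (Nat.lt_succ_of_le hj))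
      have hCpos : 0 < C := by
        have h1 := hn x₀ hx₀
        have h2' : ‖(T ^ n) x₀‖ ≤ ‖T ^ n‖ * ‖x₀‖ := (T ^ n).le_opNorm x₀
        rw [hx₀, mul_one] at h2'
        have : (2 : ℝ) ≤ C := le_trans h1 (le_trans h2' (hCle n le_rfl))
        linarith
      -- lower bound on remainders
      have hrem : ∀ r < n, ∀ x : X, ‖x‖ = 1 → 2 / C ≤ ‖(T ^ r) x‖ := by
        intro r hr x hx
        have heq : T ^ n = T ^ (n - r) * T ^ r := by
          rw [← pow_add, Nat.sub_add_cancel (le_of_lt hr)]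
        have h1 : 2 ≤ ‖(T ^ n) x‖ := hn x hx
        rw [heq] at h1
        have h2' : ‖(T ^ (n - r) * T ^ r) x‖ ≤ ‖T ^ (n - r)‖ * ‖(T ^ r) x‖ :=
          (T ^ (n - r)).le_opNorm _
        have h3 : ‖T ^ (n - r)‖ * ‖(T ^ r) x‖ ≤ C * ‖(T ^ r) x‖ :=
          mul_le_mul_of_nonneg_right (hCle _ (Nat.sub_le n r)) (norm_nonneg _)
        have h4 : 2 ≤ C * ‖(T ^ r) x‖ := le_trans h1 (le_trans h2' h3)
        rw [div_le_iff₀ hCpos]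
        linarith [h4]
      -- choose K
      obtain ⟨K, hK⟩ := pow_unbounded_of_one_lt (M * C / 2) (by norm_num : (1:ℝ) < 2)
      refine ⟨n * K, fun m hm x hx => ?_⟩
      set k := m / n with hk
      set r := m % n with hr
      have hmk : m = n * k + r := (Nat.div_add_mod m n).symm
      have hrlt : r < n := Nat.mod_lt m hnpos
      have hkK : K ≤ k := by
        by_contra h
        push_neg at h
        have : m < n * K := by
          calc m = n * k + r := hmk
            _ < n * k + n := by omega
            _ = n * (k + 1) := by ring
            _ ≤ n * K := Nat.mul_le_mul_left n h
        omega
      have heq : T ^ m = T ^ (n * k) * T ^ r := by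
        rw [← pow_add, ← hmk]
      rw [heq]
      have h1 : 2 ^ k * ‖(T ^ r) x‖ ≤ ‖(T ^ (n * k)) ((T ^ r) x)‖ := hpow k _
      have h2' : 2 / C ≤ ‖(T ^ r) x‖ := hrem r hrlt x hx
      have h3 : 2 ^ k * (2 / C) ≤ 2 ^ k * ‖(T ^ r) x‖ :=
        mul_le_mul_of_nonneg_left h2' (by positivity)
      have h4 : M * C / 2 * (2 / C) ≤ 2 ^ k * (2 / C) := by
        apply mul_le_mul_of_nonneg_right _ (by positivity)
        calc M * C / 2 ≤ 2 ^ K := le_of_lt hK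
          _ ≤ 2 ^ k := pow_le_pow_right₀ (by norm_num) hkK
      have h5 : M * C / 2 * (2 / C) = M := by field_simp
      calc M = M * C / 2 * (2 / C) := h5.symm
        _ ≤ 2 ^ k * (2 / C) := h4
        _ ≤ 2 ^ k * ‖(T ^ r) x‖ := h3
        _ ≤ ‖(T ^ (n * k)) ((T ^ r) x)‖ := h1
        _ = ‖(T ^ (n * k) * T ^ r) x‖ := rfl
    · push_neg at hx0
      exact ⟨0, fun m _ x hx => absurd hx (hx0 x)⟩
  · intro h
    obtain ⟨N, hN⟩ := h 2 (by norm_num)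
    exact ⟨N, fun x hx => hN N le_rfl x hx⟩
end

section
/- Let (X, 𝔄, μ) be a σ-finite measure space and τ : X → X a non-singular measurable transformation such that the composition operator C_τ is bounded on L^{pq}(X) (1 < p < ∞, 1 ≤ q < ∞). If C_τ is positively expansive, then for every measurable set A with 0 < μ(A) < ∞ one has sup_{n∈ℕ} μ(τ^{-n}(A)) = ∞. -/
open MeasureTheory Filter Set
open scoped ENNReal NNReal

/-! ### Auxiliary machinery -/

noncomputable def modelI (m : ℝ≥0∞) (t : ℝ) : ℝ≥0∞ :=
  ∫⁻ s in Set.Ioc (0:ℝ) t, (if m ≤ ENNReal.ofReal s then 0 else 1)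

noncomputable def modelQ (p q : ℝ) (m : ℝ≥0∞) : ℝ≥0∞ :=
  ENNReal.ofReal (q / p) *
    ∫⁻ t in Set.Ioi (0:ℝ),
      (ENNReal.ofReal (t ^ (1/p)) * ((ENNReal.ofReal t)⁻¹ * modelI m t)) ^ q / ENNReal.ofReal t

section Aux

variable {X : Type*} [MeasurableSpace X] (μ : MeasureTheory.Measure X)

lemma rearr_smul_indicator (c : ℝ) (hc : 0 < c) (B : Set X) (s : ℝ) :
    rearr μ (fun x => (c:ℂ) * B.indicator (fun _ => (1:ℂ)) x) s
      = if μ B ≤ ENNReal.ofReal s then 0 else ENNReal.ofReal c := by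
  have hset : ∀ l : ℝ≥0∞, {x | l < (‖(c:ℂ) * B.indicator (fun _ => (1:ℂ)) x‖₊ : ℝ≥0∞)}
      = if l < ENNReal.ofReal c then B else ∅ := by
    intro l
    ext x
    by_cases hx : x ∈ B <;> by_cases hl : l < ENNReal.ofReal c <;>
      simp [Set.indicator, hx, hl, (by rw [← enorm_eq_nnnorm, Real.enorm_eq_ofReal hc.le] : ((‖c‖₊ : ℝ≥0∞)) = ENNReal.ofReal c), not_lt]
  unfold rearr
  simp only [hset]
  by_cases hs : μ B ≤ ENNReal.ofReal s
  · simp only [hs, if_true]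
    have : (0:ℝ≥0∞) ∈ {l : ℝ≥0∞ | μ (if l < ENNReal.ofReal c then B else ∅) ≤ ENNReal.ofReal s} := by
      by_cases h0 : (0:ℝ≥0∞) < ENNReal.ofReal c <;> simp [h0, hs]
    exact le_antisymm (sInf_le this) zero_le
  · simp only [hs, if_false]
    have : {l : ℝ≥0∞ | μ (if l < ENNReal.ofReal c then B else ∅) ≤ ENNReal.ofReal s}
        = Set.Ici (ENNReal.ofReal c) := by
      ext l
      by_cases hl : l < ENNReal.ofReal c
      · simp [hl, hs, not_le.mpr hl]
      · simp [hl, not_lt.mp hl]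
    rw [this, csInf_Ici]

lemma maxFun_smul_indicator (c : ℝ) (hc : 0 < c) (B : Set X) (t : ℝ) :
    maxFun μ (fun x => (c:ℂ) * B.indicator (fun _ => (1:ℂ)) x) t
      = ENNReal.ofReal c * ((ENNReal.ofReal t)⁻¹ * modelI (μ B) t) := by
  unfold maxFun modelI
  simp only [rearr_smul_indicator μ c hc B]
  rw [show (∫⁻ s in Set.Ioc (0:ℝ) t, (if μ B ≤ ENNReal.ofReal s then 0 else ENNReal.ofReal c))
      = ∫⁻ s in Set.Ioc (0:ℝ) t, ENNReal.ofReal c * (if μ B ≤ ENNReal.ofReal s then 0 else 1) by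
    congr 1; ext s; by_cases h : μ B ≤ ENNReal.ofReal s <;> simp [h]]
  rw [lintegral_const_mul' _ _ ENNReal.ofReal_ne_top]
  ring

lemma lorentzQ_smul_indicator {p q : ℝ} (c : ℝ) (hc : 0 < c) (hq : 0 ≤ q) (B : Set X) :
    lorentzQ μ (fun x => (c:ℂ) * B.indicator (fun _ => (1:ℂ)) x) p q
      = ENNReal.ofReal c ^ q * modelQ p q (μ B) := by
  unfold lorentzQ modelQ
  simp only [maxFun_smul_indicator μ c hc B]
  rw [show (∫⁻ t in Set.Ioi (0:ℝ),
        (ENNReal.ofReal (t ^ (1/p)) * (ENNReal.ofReal c * ((ENNReal.ofReal t)⁻¹ * modelI (μ B) t))) ^ q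
          / ENNReal.ofReal t)
      = ∫⁻ t in Set.Ioi (0:ℝ), ENNReal.ofReal c ^ q *
          ((ENNReal.ofReal (t ^ (1/p)) * ((ENNReal.ofReal t)⁻¹ * modelI (μ B) t)) ^ q / ENNReal.ofReal t) by
    congr 1; ext t
    rw [show ENNReal.ofReal (t ^ (1/p)) * (ENNReal.ofReal c * ((ENNReal.ofReal t)⁻¹ * modelI (μ B) t))
        = ENNReal.ofReal c * (ENNReal.ofReal (t ^ (1/p)) * ((ENNReal.ofReal t)⁻¹ * modelI (μ B) t)) by ring]
    rw [ENNReal.mul_rpow_of_nonneg _ _ hq, mul_div_assoc]]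
  rw [lintegral_const_mul' _ _
    (ENNReal.rpow_lt_top_of_nonneg hq ENNReal.ofReal_ne_top).ne]
  ring

lemma lorentzNorm_smul_indicator {p q : ℝ} (c : ℝ) (hc : 0 < c) (hq : 0 < q) (B : Set X) :
    lorentzNorm μ (fun x => (c:ℂ) * B.indicator (fun _ => (1:ℂ)) x) p q
      = ENNReal.ofReal c * modelQ p q (μ B) ^ (1/q) := by
  unfold lorentzNorm
  rw [lorentzQ_smul_indicator μ c hc hq.le B,
    ENNReal.mul_rpow_of_nonneg _ _ (by positivity : (0:ℝ) ≤ 1/q),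
    ← ENNReal.rpow_mul, mul_one_div_cancel hq.ne', ENNReal.rpow_one]

end Aux


lemma modelQ_mono {p q : ℝ} (hq : 0 ≤ q) {m m' : ℝ≥0∞} (h : m ≤ m') :
    modelQ p q m ≤ modelQ p q m' := by
  unfold modelQ
  refine mul_le_mul_right (lintegral_mono fun t => ?_) _
  refine ENNReal.div_le_div_right (ENNReal.rpow_le_rpow (mul_le_mul_right
    (mul_le_mul_right (lintegral_mono fun s => ?_) _) _) hq) _
  by_cases h1 : m ≤ ENNReal.ofReal s
  · simp [h1]
  · by_cases h2 : m' ≤ ENNReal.ofReal s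
    · exact absurd (h.trans h2) h1
    · simp [h1, h2]

lemma modelI_le_ofReal (m : ℝ≥0∞) (t : ℝ) : modelI m t ≤ ENNReal.ofReal t := by
  calc modelI m t ≤ ∫⁻ _ in Set.Ioc (0:ℝ) t, 1 := lintegral_mono fun s => by split <;> simp
  _ = ENNReal.ofReal t := by simp [Real.volume_Ioc]

lemma modelI_le_toReal {m : ℝ≥0∞} (hm : m ≠ ⊤) (t : ℝ) :
    modelI m t ≤ ENNReal.ofReal m.toReal := by
  have hb : ∀ s : ℝ, (if m ≤ ENNReal.ofReal s then (0:ℝ≥0∞) else 1)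
      ≤ (Set.Iic m.toReal).indicator (fun _ => 1) s := by
    intro s
    by_cases hs : s ≤ m.toReal
    · by_cases h : m ≤ ENNReal.ofReal s <;> simp [Set.indicator, hs, h]
    · have : m ≤ ENNReal.ofReal s := by
        rw [← ENNReal.ofReal_toReal hm]
        exact ENNReal.ofReal_le_ofReal (le_of_lt (not_le.mp hs))
      simp [this]
  calc modelI m t ≤ ∫⁻ s in Set.Ioc (0:ℝ) t, (Set.Iic m.toReal).indicator (fun _ => 1) s :=
        lintegral_mono hb
  _ = volume (Set.Iic m.toReal ∩ Set.Ioc 0 t) := by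
      rw [lintegral_indicator measurableSet_Iic, setLIntegral_one, Measure.restrict_apply measurableSet_Iic]
  _ ≤ volume (Set.Ioc (0:ℝ) m.toReal) := by
      apply measure_mono
      rintro s ⟨hs1, hs2, _⟩
      exact ⟨hs2, hs1⟩
  _ ≤ ENNReal.ofReal m.toReal := by simp [Real.volume_Ioc]

lemma modelQ_lt_top {p q : ℝ} (hp : 1 < p) (hq : 1 ≤ q) {m : ℝ≥0∞} (hm : m ≠ ⊤) :
    modelQ p q m < ⊤ := by
  have hp0 : 0 < p := lt_trans one_pos hp
  have hq0 : 0 < q := lt_of_lt_of_le one_pos hq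
  set m' := m.toReal with hm'
  have hm'0 : 0 ≤ m' := ENNReal.toReal_nonneg
  set T := max m' 1 with hT
  have hT1 : (1:ℝ) ≤ T := le_max_right _ _
  have hT0 : (0:ℝ) < T := lt_of_lt_of_le one_pos hT1
  have hbound1 : ∀ t ∈ Set.Ioc (0:ℝ) T,
      (ENNReal.ofReal (t ^ (1/p)) * ((ENNReal.ofReal t)⁻¹ * modelI m t)) ^ q / ENNReal.ofReal t
        ≤ ENNReal.ofReal (t ^ (q/p - 1)) := by
    rintro t ⟨ht0, -⟩
    have hot : ENNReal.ofReal t ≠ 0 := by simp [ht0, not_le.mpr ht0]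
    have h1 : (ENNReal.ofReal t)⁻¹ * modelI m t ≤ 1 := by
      calc (ENNReal.ofReal t)⁻¹ * modelI m t ≤ (ENNReal.ofReal t)⁻¹ * ENNReal.ofReal t :=
            mul_le_mul_right (modelI_le_ofReal m t) _
      _ = 1 := ENNReal.inv_mul_cancel hot ENNReal.ofReal_ne_top
    calc (ENNReal.ofReal (t ^ (1/p)) * ((ENNReal.ofReal t)⁻¹ * modelI m t)) ^ q / ENNReal.ofReal t
        ≤ (ENNReal.ofReal (t ^ (1/p)) * 1) ^ q / ENNReal.ofReal t :=
          ENNReal.div_le_div_right (ENNReal.rpow_le_rpow (mul_le_mul_right h1 _) hq0.le) _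
    _ = ENNReal.ofReal (t ^ (q/p - 1)) := by
        rw [mul_one, ENNReal.ofReal_rpow_of_pos (Real.rpow_pos_of_pos ht0 _),
          ← Real.rpow_mul ht0.le, ← ENNReal.ofReal_div_of_pos ht0]
        congr 1
        rw [Real.rpow_sub_one ht0.ne', ← one_div_mul_eq_div]
        ring_nf
  have hbound2 : ∀ t ∈ Set.Ioi T,
      (ENNReal.ofReal (t ^ (1/p)) * ((ENNReal.ofReal t)⁻¹ * modelI m t)) ^ q / ENNReal.ofReal t
        ≤ ENNReal.ofReal (m' ^ q) * ENNReal.ofReal (t ^ ((1/p - 1) * q - 1)) := by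
    intro t ht
    have ht0 : (0:ℝ) < t := lt_trans hT0 ht
    have hot : ENNReal.ofReal t ≠ 0 := by simp [ht0, not_le.mpr ht0]
    have h1 : (ENNReal.ofReal t)⁻¹ * modelI m t ≤ ENNReal.ofReal (m' / t) := by
      calc (ENNReal.ofReal t)⁻¹ * modelI m t ≤ (ENNReal.ofReal t)⁻¹ * ENNReal.ofReal m' :=
            mul_le_mul_right (modelI_le_toReal hm t) _
      _ = ENNReal.ofReal (m' / t) := by
            rw [ENNReal.ofReal_div_of_pos ht0, div_eq_mul_inv, mul_comm]
    calc (ENNReal.ofReal (t ^ (1/p)) * ((ENNReal.ofReal t)⁻¹ * modelI m t)) ^ q / ENNReal.ofReal t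
        ≤ (ENNReal.ofReal (t ^ (1/p)) * ENNReal.ofReal (m' / t)) ^ q / ENNReal.ofReal t :=
          ENNReal.div_le_div_right (ENNReal.rpow_le_rpow (mul_le_mul_right h1 _) hq0.le) _
    _ = ENNReal.ofReal ((t ^ (1/p) * (m' / t)) ^ q / t) := by
        rw [← ENNReal.ofReal_mul (Real.rpow_nonneg ht0.le _),
          ENNReal.ofReal_rpow_of_nonneg (by positivity) hq0.le,
          ← ENNReal.ofReal_div_of_pos ht0]
    _ ≤ ENNReal.ofReal (m' ^ q) * ENNReal.ofReal (t ^ ((1/p - 1) * q - 1)) := by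
        rw [← ENNReal.ofReal_mul (by positivity)]
        apply ENNReal.ofReal_le_ofReal
        have key : (t ^ (1/p) * (m' / t)) ^ q / t = m' ^ q * t ^ ((1/p - 1) * q - 1) := by
          have h2 : t ^ (1/p) * (m' / t) = m' * t ^ (1/p - 1) := by
            rw [Real.rpow_sub_one ht0.ne']
            field_simp
          rw [h2, Real.mul_rpow hm'0 (Real.rpow_nonneg ht0.le _), ← Real.rpow_mul ht0.le,
            Real.rpow_sub_one ht0.ne' ((1/p - 1) * q), mul_div_assoc]
        rw [key]
  have hsplit : Set.Ioi (0:ℝ) = Set.Ioc 0 T ∪ Set.Ioi T := (Set.Ioc_union_Ioi_eq_Ioi hT0.le).symm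
  rw [modelQ, hsplit, lintegral_union measurableSet_Ioi (Set.Ioc_disjoint_Ioi le_rfl)]
  have hfin1 : (∫⁻ t in Set.Ioc (0:ℝ) T, ENNReal.ofReal (t ^ (q/p - 1))) < ⊤ := by
    have hi : IntervalIntegrable (fun t : ℝ => t ^ (q/p - 1)) volume 0 T :=
      intervalIntegral.intervalIntegrable_rpow' (by rw [neg_lt_sub_iff_lt_add]; nlinarith [div_pos hq0 hp0])
    rw [intervalIntegrable_iff, Set.uIoc_of_le hT0.le] at hi
    calc (∫⁻ t in Set.Ioc (0:ℝ) T, ENNReal.ofReal (t ^ (q/p - 1)))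
        ≤ ∫⁻ t in Set.Ioc (0:ℝ) T, (‖t ^ (q/p - 1)‖₊ : ℝ≥0∞) :=
          lintegral_mono fun t => Real.ofReal_le_enorm _
    _ < ⊤ := hi.2
  have hfin2 : (∫⁻ t in Set.Ioi T, ENNReal.ofReal (t ^ ((1/p - 1) * q - 1))) < ⊤ := by
    have he : (1/p - 1) * q - 1 < -1 := by
      have h1p : 1/p < 1 := by rw [div_lt_one hp0]; exact hp
      nlinarith
    have hi : IntegrableOn (fun t : ℝ => t ^ ((1/p - 1) * q - 1)) (Set.Ioi T) volume :=
      integrableOn_Ioi_rpow_of_lt he hT0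
    calc (∫⁻ t in Set.Ioi T, ENNReal.ofReal (t ^ ((1/p - 1) * q - 1)))
        ≤ ∫⁻ t in Set.Ioi T, (‖t ^ ((1/p - 1) * q - 1)‖₊ : ℝ≥0∞) :=
          lintegral_mono fun t => Real.ofReal_le_enorm _
    _ < ⊤ := hi.2
  apply ENNReal.mul_lt_top ENNReal.ofReal_lt_top
  apply ENNReal.add_lt_top.mpr
  constructor
  · exact lt_of_le_of_lt (setLIntegral_mono ((measurable_id.pow_const _).ennreal_ofReal) hbound1) hfin1
  · refine lt_of_le_of_lt (setLIntegral_mono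
      (measurable_const.mul ((measurable_id.pow_const _).ennreal_ofReal)) hbound2) ?_
    simp only [Pi.mul_apply, id_eq]
    rw [lintegral_const_mul' _ _ ENNReal.ofReal_ne_top]
    exact ENNReal.mul_lt_top ENNReal.ofReal_lt_top hfin2

lemma modelQ_pos {p q : ℝ} (hp : 1 < p) (hq : 1 ≤ q) {m : ℝ≥0∞} (hm0 : m ≠ 0) (hm : m ≠ ⊤) :
    0 < modelQ p q m := by
  have hp0 : 0 < p := lt_trans one_pos hp
  have hq0 : 0 < q := lt_of_lt_of_le one_pos hq
  set m' := m.toReal with hm'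
  have hm'0 : 0 < m' := ENNReal.toReal_pos hm0 hm
  set t1 := min m' 1 with ht1def
  have ht10 : 0 < t1 := lt_min hm'0 one_pos
  set a := t1/2 with hadef
  set b := 3*t1/4 with hbdef
  have ha0 : 0 < a := by positivity
  have hab : a < b := by rw [hadef, hbdef]; linarith
  have hbt1 : b < t1 := by rw [hbdef]; linarith
  set e := q/p - 1 with hedef
  set c := ENNReal.ofReal (min (a ^ e) (b ^ e)) with hcdef
  have hc0 : c ≠ 0 := by
    rw [hcdef]
    simp only [ne_eq, ENNReal.ofReal_eq_zero, not_le]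
    exact lt_min (Real.rpow_pos_of_pos ha0 _) (Real.rpow_pos_of_pos (ha0.trans hab) _)
  -- pointwise lower bound
  have hbound : ∀ t : ℝ, (Set.Ioc a b).indicator (fun _ => c) t
      ≤ (ENNReal.ofReal (t ^ (1/p)) * ((ENNReal.ofReal t)⁻¹ * modelI m t)) ^ q / ENNReal.ofReal t := by
    intro t
    by_cases ht : t ∈ Set.Ioc a b
    · obtain ⟨hta, htb⟩ := ht
      have ht0 : 0 < t := ha0.trans hta
      have hot : ENNReal.ofReal t ≠ 0 := by simp [not_le.mpr ht0]
      have hI : modelI m t = ENNReal.ofReal t := by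
        rw [modelI]
        rw [setLIntegral_congr_fun measurableSet_Ioc (fun s hs => ?_)]
        · rw [setLIntegral_one, Real.volume_Ioc, sub_zero]
        · have hsm : ENNReal.ofReal s < m := by
            rw [← ENNReal.ofReal_toReal hm]
            apply ENNReal.ofReal_lt_ofReal_iff_of_nonneg hs.1.le |>.mpr
            calc s ≤ t := hs.2
            _ ≤ b := htb
            _ < t1 := hbt1
            _ ≤ m' := min_le_left _ _
          simp [not_le.mpr hsm]
      have hone : (ENNReal.ofReal t)⁻¹ * modelI m t = 1 := by
        rw [hI, ENNReal.inv_mul_cancel hot ENNReal.ofReal_ne_top]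
      have hJ : (ENNReal.ofReal (t ^ (1/p)) * ((ENNReal.ofReal t)⁻¹ * modelI m t)) ^ q / ENNReal.ofReal t
          = ENNReal.ofReal (t ^ e) := by
        rw [hone, mul_one, ENNReal.ofReal_rpow_of_pos (Real.rpow_pos_of_pos ht0 _),
          ← Real.rpow_mul ht0.le, ← ENNReal.ofReal_div_of_pos ht0]
        congr 1
        rw [show (1:ℝ)/p * q = q/p by ring, hedef, Real.rpow_sub_one ht0.ne']
      rw [hJ, Set.indicator_of_mem (Set.mem_Ioc.mpr ⟨hta, htb⟩), hcdef]
      apply ENNReal.ofReal_le_ofReal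
      rcases le_or_gt 0 e with he | he
      · exact le_trans (min_le_left _ _) (Real.rpow_le_rpow ha0.le hta.le he)
      · exact le_trans (min_le_right _ _) (Real.rpow_le_rpow_of_nonpos ht0 htb he.le)
    · rw [Set.indicator_of_notMem ht]
      exact zero_le
  have hint : (∫⁻ t in Set.Ioi (0:ℝ), (Set.Ioc a b).indicator (fun _ => c) t) = c * ENNReal.ofReal (b - a) := by
    have hsub : Set.Ioc a b ∩ Set.Ioi 0 = Set.Ioc a b :=
      Set.inter_eq_left.mpr fun x hx => ha0.trans hx.1
    rw [lintegral_indicator_const measurableSet_Ioc, Measure.restrict_apply measurableSet_Ioc,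
      hsub, Real.volume_Ioc]
  rw [modelQ]
  apply ENNReal.mul_pos
  · simp only [ne_eq, ENNReal.ofReal_eq_zero, not_le]
    positivity
  · have := lintegral_mono (μ := volume.restrict (Set.Ioi (0:ℝ))) hbound
    rw [hint] at this
    intro h0
    rw [h0] at this
    simp only [le_zero_iff, mul_eq_zero] at this
    rcases this with h | h
    · exact hc0 h
    · rw [ENNReal.ofReal_eq_zero] at h
      linarith

/-- if `C_τ` is positively expansive then `sup_n μ(τ^{-n} A) = ∞`
for every measurable `A` with `0 < μ(A) < ∞`. -/
theorem stmt_12 {X : Type*} [MeasurableSpace X] (μ : Measure X) [SigmaFinite μ]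
    (τ : X → X) (hns : Nonsingular μ τ)
    (p q : ℝ) (hp : 1 < p) (hq : 1 ≤ q)
    (hbdd : ∃ C : ℝ≥0∞, C < ⊤ ∧
      ∀ g : X → ℂ, lorentzNorm μ (g ∘ τ) p q ≤ C * lorentzNorm μ g p q)
    (hexp : ∀ g : X → ℂ, Measurable g → lorentzNorm μ g p q = 1 →
      ∃ n : ℕ, 2 ≤ lorentzNorm μ (g ∘ τ^[n]) p q) :
    ∀ A : Set X, MeasurableSet A → 0 < μ A → μ A < ⊤ →
      (⨆ n : ℕ, μ ((τ^[n]) ⁻¹' A)) = ⊤ := by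
  intro A hA hA0 hAtop
  by_contra hsup
  have hq0 : 0 < q := lt_of_lt_of_le one_pos hq
  set NN : ℝ≥0∞ → ℝ≥0∞ := fun m => modelQ p q m ^ (1/q) with hNN
  set S := ⨆ n : ℕ, μ ((τ^[n]) ⁻¹' A) with hS
  have hμn : ∀ n, μ ((τ^[n]) ⁻¹' A) ≤ S := fun n => le_iSup (fun n => μ ((τ^[n]) ⁻¹' A)) n
  set K := NN S with hK
  have hKtop : K < ⊤ :=
    ENNReal.rpow_lt_top_of_nonneg (by positivity) (modelQ_lt_top hp hq hsup).ne
  have hNNn_le : ∀ n, NN (μ ((τ^[n]) ⁻¹' A)) ≤ K := fun n =>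
    ENNReal.rpow_le_rpow (modelQ_mono hq0.le (hμn n)) (by positivity)
  have hNNA_pos : 0 < NN (μ A) :=
    ENNReal.rpow_pos (modelQ_pos hp hq hA0.ne' hAtop.ne) (modelQ_lt_top hp hq hAtop.ne).ne
  have hpre0 : (τ^[0]) ⁻¹' A = A := by simp
  have hNNA_le : NN (μ A) ≤ K := by
    have := hNNn_le 0
    rwa [hpre0] at this
  have claim : ∀ k : ℕ, ∃ n : ℕ, NN (μ A) * 2^k ≤ NN (μ ((τ^[n]) ⁻¹' A)) := by
    intro k
    induction k with
    | zero => exact ⟨0, by rw [hpre0, pow_zero, mul_one]⟩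
    | succ k ih =>
      obtain ⟨n, hn⟩ := ih
      set L := NN (μ ((τ^[n]) ⁻¹' A)) with hL
      have hL0 : 0 < L :=
        lt_of_lt_of_le (ENNReal.mul_pos hNNA_pos.ne' (pow_ne_zero _ two_ne_zero)) hn
      have hLtop : L < ⊤ := lt_of_le_of_lt (hNNn_le n) hKtop
      set c := (L.toReal)⁻¹ with hc
      have hc0 : 0 < c := inv_pos.mpr (ENNReal.toReal_pos hL0.ne' hLtop.ne)
      have hocr : ENNReal.ofReal c = L⁻¹ := by
        rw [hc, ENNReal.ofReal_inv_of_pos (ENNReal.toReal_pos hL0.ne' hLtop.ne),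
          ENNReal.ofReal_toReal hLtop.ne]
      have hgnorm : lorentzNorm μ
          (fun x => (c:ℂ) * ((τ^[n]) ⁻¹' A).indicator (fun _ => (1:ℂ)) x) p q = 1 := by
        rw [lorentzNorm_smul_indicator μ c hc0 hq0, hocr]
        show L⁻¹ * L = 1
        exact ENNReal.inv_mul_cancel hL0.ne' hLtop.ne
      have hmeas : Measurable (fun x => (c:ℂ) * ((τ^[n]) ⁻¹' A).indicator (fun _ => (1:ℂ)) x) :=
        measurable_const.mul (measurable_const.indicator ((hns.1.iterate n) hA))
      obtain ⟨m, hm⟩ := hexp _ hmeas hgnorm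
      have hco : (fun x => (c:ℂ) * ((τ^[n]) ⁻¹' A).indicator (fun _ => (1:ℂ)) x) ∘ (τ^[m])
          = fun x => (c:ℂ) * ((τ^[n+m]) ⁻¹' A).indicator (fun _ => (1:ℂ)) x := by
        funext x
        have hxiff : τ^[m] x ∈ (τ^[n]) ⁻¹' A ↔ x ∈ (τ^[n+m]) ⁻¹' A := by
          simp [Set.mem_preimage, Function.iterate_add_apply]
        by_cases hx : τ^[m] x ∈ (τ^[n]) ⁻¹' A
        · simp [Function.comp_apply, Set.indicator_of_mem hx,
            Set.indicator_of_mem (hxiff.mp hx)]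
        · simp [Function.comp_apply, Set.indicator_of_notMem hx,
            Set.indicator_of_notMem (fun h => hx (hxiff.mpr h))]
      rw [hco, lorentzNorm_smul_indicator μ c hc0 hq0, hocr] at hm
      refine ⟨n+m, ?_⟩
      have hm' : 2 ≤ L⁻¹ * NN (μ ((τ^[n+m]) ⁻¹' A)) := hm
      have h2L : L * 2 ≤ L * (L⁻¹ * NN (μ ((τ^[n+m]) ⁻¹' A))) := mul_le_mul_right hm' _
      rw [← mul_assoc, ENNReal.mul_inv_cancel hL0.ne' hLtop.ne, one_mul] at h2L
      calc NN (μ A) * 2^(k+1) = NN (μ A) * 2^k * 2 := by rw [pow_succ, mul_assoc]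
      _ ≤ L * 2 := mul_le_mul_left hn _
      _ ≤ NN (μ ((τ^[n+m]) ⁻¹' A)) := h2L
  obtain ⟨k, hk⟩ : ∃ k : ℕ, K < NN (μ A) * 2^k := by
    have hdiv : K / NN (μ A) < ⊤ := ENNReal.div_lt_top hKtop.ne hNNA_pos.ne'
    obtain ⟨k, hk⟩ := ENNReal.exists_nat_gt hdiv.ne
    refine ⟨k, ?_⟩
    have hk2 : (k:ℝ≥0∞) ≤ 2^k := by
      have := (Nat.lt_two_pow_self (n := k)).le
      exact_mod_cast this
    have hNNA_top : NN (μ A) ≠ ⊤ := (lt_of_le_of_lt hNNA_le hKtop).ne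
    have : K / NN (μ A) < 2^k := lt_of_lt_of_le hk hk2
    rw [ENNReal.div_lt_iff (Or.inl hNNA_pos.ne') (Or.inl hNNA_top)] at this
    rwa [mul_comm] at this
  obtain ⟨n, hn⟩ := claim k
  exact absurd (le_trans hn (hNNn_le n)) (not_le.mpr hk)
end

section
/- Let (X, 𝔄, μ) be a σ-finite measure space and τ : X → X a non-singular measurable transformation with C_τ bounded on L^{pq}(X) (1 < p < ∞, 1 ≤ q < ∞). If for every measurable set A with 0 < μ(A) < ∞ one has sup_{n∈ℕ} μ(τ^{-n}(A)) = ∞, then C_τ is positively expansive, i.e. sup_{n∈ℕ} ‖C_τ^n g‖_{pq} = ∞ for every nonzero g ∈ L^{pq}(X). -/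
open MeasureTheory Filter Set
open scoped ENNReal NNReal

lemma lint_rpow (r : ℝ) (hr : -1 < r) (T : ℝ) (hT : 0 < T) :
    ∫⁻ t in Set.Ioc (0:ℝ) T, ENNReal.ofReal (t ^ r) =
      ENNReal.ofReal (T ^ (r+1) / (r+1)) := by
  rw [← MeasureTheory.ofReal_integral_eq_lintegral_ofReal]
  · rw [← intervalIntegral.integral_of_le hT.le, integral_rpow (Or.inl hr),
      Real.zero_rpow (by linarith), sub_zero]
  · exact (intervalIntegral.intervalIntegrable_rpow' hr (a := 0) (b := T)).1
  · exact ae_restrict_of_forall_mem measurableSet_Ioc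
      (fun x hx => Real.rpow_nonneg hx.1.le r)

lemma key_lb {X : Type*} [MeasurableSpace X] (μ : Measure X) (f : X → ℂ)
    (p q : ℝ) (hp : 1 < p) (hq : 1 ≤ q) (h : ℝ≥0∞)
    (T : ℝ) (hT : 0 < T)
    (hdist : ENNReal.ofReal T < μ {x | h < (‖f x‖₊ : ℝ≥0∞)}) :
    h ^ q * ENNReal.ofReal (T ^ (q/p)) ≤ lorentzQ μ f p q := by
  have hp0 : (0:ℝ) < p := by linarith
  have hq0 : (0:ℝ) < q := by linarith
  set m := μ {x | h < (‖f x‖₊ : ℝ≥0∞)} with hm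
  have hre : ∀ s : ℝ, ENNReal.ofReal s < m → h ≤ rearr μ f s := by
    intro s hs
    apply le_sInf
    intro l hl
    by_contra hlh
    push_neg at hlh
    have hsub : {x | h < (‖f x‖₊ : ℝ≥0∞)} ⊆ {x | l < (‖f x‖₊ : ℝ≥0∞)} :=
      fun x hx => lt_trans hlh hx
    exact absurd ((measure_mono hsub).trans hl) (not_le.mpr hs)
  have hmax : ∀ t ∈ Set.Ioc (0:ℝ) T, h ≤ maxFun μ f t := by
    intro t ht
    have ht0 : 0 < t := ht.1
    have h1 : h * ENNReal.ofReal t ≤ ∫⁻ s in Set.Ioc (0:ℝ) t, rearr μ f s := by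
      calc h * ENNReal.ofReal t = ∫⁻ _ in Set.Ioc (0:ℝ) t, h := by
            rw [setLIntegral_const, Real.volume_Ioc, sub_zero]
        _ ≤ _ := by
            apply setLIntegral_mono' measurableSet_Ioc
            intro s hs
            apply hre
            calc ENNReal.ofReal s ≤ ENNReal.ofReal T :=
                  ENNReal.ofReal_le_ofReal (hs.2.trans ht.2)
              _ < m := hdist
    have hne0 : ENNReal.ofReal t ≠ 0 := by
      simp [ENNReal.ofReal_eq_zero, not_le, ht0]
    calc h = (ENNReal.ofReal t)⁻¹ * (h * ENNReal.ofReal t) := by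
          rw [mul_comm h, ← mul_assoc, ENNReal.inv_mul_cancel hne0 ENNReal.ofReal_ne_top,
            one_mul]
      _ ≤ maxFun μ f t := mul_le_mul_right h1 _
  have step1 : ∫⁻ t in Set.Ioc (0:ℝ) T, h ^ q * ENNReal.ofReal (t ^ (q/p - 1)) ≤
      ∫⁻ t in Set.Ioi (0:ℝ),
        (ENNReal.ofReal (t ^ (1/p)) * maxFun μ f t) ^ q / ENNReal.ofReal t := by
    have hsub : Set.Ioc (0:ℝ) T ⊆ Set.Ioi 0 := fun x hx => hx.1
    refine le_trans ?_ (lintegral_mono' (Measure.restrict_mono hsub le_rfl) le_rfl)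
    apply setLIntegral_mono' measurableSet_Ioc
    intro t ht
    have ht0 : 0 < t := ht.1
    have heq : h ^ q * ENNReal.ofReal (t ^ (q/p - 1)) =
        (ENNReal.ofReal (t ^ (1/p)) * h) ^ q / ENNReal.ofReal t := by
      rw [ENNReal.mul_rpow_of_nonneg _ _ hq0.le,
        ENNReal.ofReal_rpow_of_pos (Real.rpow_pos_of_pos ht0 _),
        ← Real.rpow_mul ht0.le]
      have : 1/p * q = q/p := by ring
      rw [this, mul_comm (ENNReal.ofReal (t ^ (q/p))) (h^q), mul_div_assoc,
        ← ENNReal.ofReal_div_of_pos ht0]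
      congr 2
      rw [Real.rpow_sub ht0, Real.rpow_one]
    rw [heq]
    apply ENNReal.div_le_div_right
    apply ENNReal.rpow_le_rpow _ hq0.le
    exact mul_le_mul_right (hmax t ht) _
  have step2 : ∫⁻ t in Set.Ioc (0:ℝ) T, h ^ q * ENNReal.ofReal (t ^ (q/p - 1)) =
      h ^ q * ENNReal.ofReal (T ^ (q/p) * (p / q)) := by
    rw [lintegral_const_mul]
    · have hr' : (-1:ℝ) < q/p - 1 := by
        have := div_pos hq0 hp0; linarith
      rw [lint_rpow (q/p - 1) hr' T hT]
      have he : q/p - 1 + 1 = q/p := by ring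
      rw [he, div_div_eq_mul_div, mul_div_assoc]
    · exact (measurable_id.pow measurable_const).ennreal_ofReal
  have hconst : ENNReal.ofReal (q/p) * ENNReal.ofReal (T ^ (q/p) * (p/q)) =
      ENNReal.ofReal (T ^ (q/p)) := by
    rw [← ENNReal.ofReal_mul (by positivity)]
    congr 1
    field_simp
  calc h ^ q * ENNReal.ofReal (T ^ (q/p))
      = ENNReal.ofReal (q/p) * (h ^ q * ENNReal.ofReal (T ^ (q/p) * (p/q))) := by
        rw [← mul_assoc, mul_comm (ENNReal.ofReal (q/p)) (h^q), mul_assoc, hconst]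
    _ ≤ lorentzQ μ f p q := by
        unfold lorentzQ
        exact mul_le_mul_right (step2 ▸ step1) _

/-- if `sup_n μ(τ^{-n} A) = ∞` for all measurable `A` with
`0 < μ(A) < ∞`, then `C_τ` is positively expansive:
`sup_n ‖C_τ^n g‖_{pq} = ∞` for every nonzero `g ∈ L^{pq}`. -/
theorem stmt_13 {X : Type*} [MeasurableSpace X] (μ : Measure X) [SigmaFinite μ]
    (τ : X → X) (hns : Nonsingular μ τ)
    (p q : ℝ) (hp : 1 < p) (hq : 1 ≤ q)
    (hbdd : ∃ C : ℝ≥0∞, C < ⊤ ∧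
      ∀ g : X → ℂ, lorentzNorm μ (g ∘ τ) p q ≤ C * lorentzNorm μ g p q)
    (hsup : ∀ A : Set X, MeasurableSet A → 0 < μ A → μ A < ⊤ →
      (⨆ n : ℕ, μ ((τ^[n]) ⁻¹' A)) = ⊤) :
    ∀ g : X → ℂ, Measurable g → ¬ g =ᵐ[μ] 0 → lorentzNorm μ g p q < ⊤ →
      (⨆ n : ℕ, lorentzNorm μ (g ∘ τ^[n]) p q) = ⊤ := by
  intro g hg hgne _hgfin
  by_contra hS
  have hq0 : (0:ℝ) < q := by linarith
  have hp0 : (0:ℝ) < p := by linarith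
  set S := ⨆ n : ℕ, lorentzNorm μ (g ∘ τ^[n]) p q with hSdef
  have hSlt : S < ⊤ := lt_top_iff_ne_top.mpr hS
  -- find h
  have hμne : μ {x | g x ≠ 0} ≠ 0 := by
    intro h0
    exact hgne (by rw [Filter.EventuallyEq, ae_iff]; simpa using h0)
  have hcover : {x | g x ≠ 0} ⊆ ⋃ k : ℕ, {x | ((k:ℝ≥0∞))⁻¹ < (‖g x‖₊:ℝ≥0∞)} := by
    intro x hx
    have hne : (‖g x‖₊ : ℝ≥0∞) ≠ 0 := by simpa using hx
    obtain ⟨n, hn⟩ := ENNReal.exists_inv_nat_lt hne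
    exact Set.mem_iUnion.mpr ⟨n, hn⟩
  have hex : ∃ k : ℕ, μ {x | ((k:ℝ≥0∞))⁻¹ < (‖g x‖₊:ℝ≥0∞)} ≠ 0 := by
    by_contra hall; push_neg at hall
    exact hμne (measure_mono_null hcover (measure_iUnion_null hall))
  obtain ⟨k, hk⟩ := hex
  have hk0 : k ≠ 0 := by
    rintro rfl
    apply hk
    have he : {x | ((0:ℕ):ℝ≥0∞)⁻¹ < (‖g x‖₊:ℝ≥0∞)} = ∅ := by
      ext x; simp
    rw [he, measure_empty]
  set h : ℝ≥0∞ := (k:ℝ≥0∞)⁻¹ with hhdef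
  have hh0 : h ≠ 0 := ENNReal.inv_ne_zero.mpr (ENNReal.natCast_ne_top k)
  have hht : h ≠ ⊤ := ENNReal.inv_ne_top.mpr (Nat.cast_ne_zero.mpr hk0)
  have hAset : MeasurableSet {x | h < (‖g x‖₊:ℝ≥0∞)} :=
    measurableSet_lt measurable_const hg.nnnorm.coe_nnreal_ennreal
  obtain ⟨A, hAm, hAsub, hA0, hAfin⟩ :=
    Measure.exists_subset_measure_lt_top hAset (pos_iff_ne_zero.mpr hk)
  have hsupm := hsup A hAm hA0 hAfin
  -- uniform bound
  have hhq0 : h ^ q ≠ 0 := (ENNReal.rpow_pos (pos_iff_ne_zero.mpr hh0) hht).ne'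
  have hhqt : h ^ q ≠ ⊤ := (ENNReal.rpow_lt_top_of_nonneg hq0.le hht).ne
  have hbound : ∀ T : ℝ, 0 < T → h ^ q * ENNReal.ofReal (T ^ (q/p)) ≤ S ^ q := by
    intro T hT
    have hlt : ENNReal.ofReal T < ⨆ n : ℕ, μ ((τ^[n]) ⁻¹' A) := by
      rw [hsupm]; exact ENNReal.ofReal_lt_top
    obtain ⟨n, hn⟩ := lt_iSup_iff.mp hlt
    have hdist : ENNReal.ofReal T < μ {x | h < (‖(g ∘ τ^[n]) x‖₊ : ℝ≥0∞)} := by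
      refine hn.trans_le (measure_mono ?_)
      intro x hx
      exact hAsub hx
    refine (key_lb μ (g ∘ τ^[n]) p q hp hq h T hT hdist).trans ?_
    have h1 : lorentzNorm μ (g ∘ τ^[n]) p q ≤ S := le_iSup (fun n => lorentzNorm μ (g ∘ τ^[n]) p q) n
    have h2 : lorentzQ μ (g ∘ τ^[n]) p q = (lorentzNorm μ (g ∘ τ^[n]) p q) ^ q := by
      rw [lorentzNorm, ← ENNReal.rpow_mul, one_div,
        inv_mul_cancel₀ (ne_of_gt hq0), ENNReal.rpow_one]
    rw [h2]
    exact ENNReal.rpow_le_rpow h1 hq0.le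
  -- contradiction
  set M := S ^ q / h ^ q with hM
  have hMfin : M ≠ ⊤ :=
    (ENNReal.div_lt_top (ENNReal.rpow_lt_top_of_nonneg hq0.le hSlt.ne).ne hhq0).ne
  set T := (M.toReal + 1) ^ (p/q) with hTdef
  have hT0 : 0 < T := Real.rpow_pos_of_pos (by positivity) _
  have hTq : T ^ (q/p) = M.toReal + 1 := by
    rw [hTdef, ← Real.rpow_mul (by positivity)]
    rw [show p/q * (q/p) = 1 by field_simp, Real.rpow_one]
  have hb := hbound T hT0
  rw [hTq] at hb
  have hle : ENNReal.ofReal (M.toReal + 1) ≤ M :=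
    (ENNReal.le_div_iff_mul_le (Or.inl hhq0) (Or.inl hhqt)).mpr (by rwa [mul_comm])
  have hcontra : M + 1 ≤ M := by
    calc M + 1 = ENNReal.ofReal (M.toReal + 1) := by
          rw [ENNReal.ofReal_add ENNReal.toReal_nonneg zero_le_one,
            ENNReal.ofReal_toReal hMfin, ENNReal.ofReal_one]
      _ ≤ M := hle
  exact absurd hcontra (not_le.mpr (ENNReal.lt_add_right hMfin one_ne_zero))
end

section
/- Let (X, 𝔄, μ) be a σ-finite measure space and τ an invertible bimeasurable non-singular transformation with C_τ invertible and bounded on L^{pq}(X) together with its inverse. If C_τ is uniformly positively expansive, then μ(τ^{-n}(A))/μ(A) → ∞ as n → ∞, uniformly over measurable sets A with 0 < μ(A) < ∞. -/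
open MeasureTheory Filter Set
open scoped ENNReal NNReal

open scoped Classical

lemma rearr_indicator {X : Type*} [MeasurableSpace X] (μ : Measure X) (B : Set X)
    (c : ℝ) (hc : 0 < c) (t : ℝ) :
    rearr μ (B.indicator fun _ => (c:ℂ)) t
      = if ENNReal.ofReal t < μ B then ENNReal.ofReal c else 0 := by
  have hnorm : ∀ x, (‖B.indicator (fun _ => (c:ℂ)) x‖₊ : ℝ≥0∞)
      = if x ∈ B then ENNReal.ofReal c else 0 := by
    intro x
    by_cases hx : x ∈ B <;>
      simp [Set.indicator, hx, ← enorm_eq_nnnorm, Real.enorm_eq_ofReal hc.le, Complex.norm_real,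
        abs_of_pos hc]
  have hset : ∀ l : ℝ≥0∞, {x | l < (‖B.indicator (fun _ => (c:ℂ)) x‖₊ : ℝ≥0∞)}
      = if l < ENNReal.ofReal c then B else ∅ := by
    intro l
    by_cases hl : l < ENNReal.ofReal c
    · simp only [hl, if_true]
      ext x; simp only [Set.mem_setOf_eq, hnorm]
      by_cases hx : x ∈ B <;> simp [hx, hl]
    · simp only [hl, if_false]
      ext x; simp only [Set.mem_setOf_eq, hnorm]
      by_cases hx : x ∈ B <;> simp [hx, hl]
  unfold rearr
  by_cases ht : ENNReal.ofReal t < μ B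
  · simp only [ht, if_true]
    have : {l : ℝ≥0∞ | μ {x | l < (‖B.indicator (fun _ => (c:ℂ)) x‖₊ : ℝ≥0∞)}
        ≤ ENNReal.ofReal t} = Set.Ici (ENNReal.ofReal c) := by
      ext l
      simp only [Set.mem_setOf_eq, hset, Set.mem_Ici]
      by_cases hl : l < ENNReal.ofReal c
      · simp [hl, not_le.mpr hl, not_le.mpr ht]
      · simp [hl, not_lt.mp hl]
    rw [this, csInf_Ici]
  · simp only [ht, if_false]
    have : {l : ℝ≥0∞ | μ {x | l < (‖B.indicator (fun _ => (c:ℂ)) x‖₊ : ℝ≥0∞)}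
        ≤ ENNReal.ofReal t} = Set.univ := by
      ext l
      simp only [Set.mem_setOf_eq, hset, Set.mem_univ, iff_true]
      by_cases hl : l < ENNReal.ofReal c
      · simp [hl, not_lt.mp ht]
      · simp [hl]
    rw [this, sInf_univ]
    rfl

lemma maxFun_indicator {X : Type*} [MeasurableSpace X] (μ : Measure X) (B : Set X)
    (hBT : μ B ≠ ⊤) (c : ℝ) (hc : 0 < c) (t : ℝ) (ht : 0 < t) :
    maxFun μ (B.indicator fun _ => (c:ℂ)) t
      = (ENNReal.ofReal t)⁻¹ * (ENNReal.ofReal c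
          * ENNReal.ofReal (min t (μ B).toReal)) := by
  set a := (μ B).toReal with ha
  have ha0 : 0 ≤ a := ENNReal.toReal_nonneg
  unfold maxFun
  congr 1
  have h1 : ∫⁻ s in Set.Ioc (0:ℝ) t, rearr μ (B.indicator fun _ => (c:ℂ)) s
      = ∫⁻ s in Set.Ioc (0:ℝ) t, (Set.Iio a).indicator (fun _ => ENNReal.ofReal c) s := by
    apply setLIntegral_congr_fun measurableSet_Ioc
    intro s hs
    rw [rearr_indicator μ B c hc]
    have : ENNReal.ofReal s < μ B ↔ s < a := by
      rw [ENNReal.ofReal_lt_iff_lt_toReal hs.1.le hBT]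
    by_cases h : s < a
    · simp [this, h, Set.indicator_of_mem, Set.mem_Iio]
    · simp [this, h, Set.indicator_of_notMem, Set.mem_Iio]
  rw [h1, lintegral_indicator measurableSet_Iio _, Measure.restrict_restrict measurableSet_Iio,
    lintegral_const, Measure.restrict_apply MeasurableSet.univ, Set.univ_inter]
  congr 1
  rcases le_or_gt a t with h | h
  · have : Set.Iio a ∩ Set.Ioc 0 t = Set.Ioo 0 a := by
      ext s; simp only [Set.mem_inter_iff, Set.mem_Iio, Set.mem_Ioc, Set.mem_Ioo]
      constructor
      · rintro ⟨h1, h2, h3⟩; exact ⟨h2, h1⟩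
      · rintro ⟨h1, h2⟩; exact ⟨h2, h1, h2.le.trans h⟩
    rw [this, Real.volume_Ioo, min_eq_right h, sub_zero]
  · have : Set.Iio a ∩ Set.Ioc 0 t = Set.Ioc 0 t := by
      ext s; simp only [Set.mem_inter_iff, Set.mem_Iio, Set.mem_Ioc]
      constructor
      · rintro ⟨h1, h2⟩; exact h2
      · rintro ⟨h1, h2⟩; exact ⟨lt_of_le_of_lt h2 h, h1, h2⟩
    rw [this, Real.volume_Ioc, min_eq_left h.le, sub_zero]

lemma lorentzQ_indicator {X : Type*} [MeasurableSpace X] (μ : Measure X) (B : Set X)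
    (hB0 : μ B ≠ 0) (hBT : μ B ≠ ⊤) (c : ℝ) (hc : 0 < c)
    (p q : ℝ) (hp : 1 < p) (hq : 1 ≤ q) :
    lorentzQ μ (B.indicator fun _ => (c:ℂ)) p q
      = ENNReal.ofReal (c ^ q * (p / (p - 1)) * (μ B).toReal ^ (q / p)) := by
  set a := (μ B).toReal with hadef
  have ha : 0 < a := ENNReal.toReal_pos hB0 hBT
  have hp0 : 0 < p := by linarith
  have hq0 : 0 < q := by linarith
  have hr : 0 < q / p := div_pos hq0 hp0
  have hs : q / p - q < 0 := by
    have : q / p < q := by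
      rw [div_lt_iff₀ hp0]; nlinarith
    linarith
  -- pointwise form of the integrand
  have hpt : ∀ t ∈ Set.Ioi (0:ℝ),
      (ENNReal.ofReal (t ^ (1/p)) * maxFun μ (B.indicator fun _ => (c:ℂ)) t) ^ q
          / ENNReal.ofReal t
        = ENNReal.ofReal (if t ≤ a then c ^ q * t ^ (q/p - 1)
            else c ^ q * a ^ q * t ^ (q/p - q - 1)) := by
    intro t ht
    simp only [Set.mem_Ioi] at ht
    rw [maxFun_indicator μ B hBT c hc t ht, ← hadef]
    rw [← ENNReal.ofReal_inv_of_pos ht]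
    rw [← ENNReal.ofReal_mul (by positivity : (0:ℝ) ≤ c),
      ← ENNReal.ofReal_mul (by positivity : (0:ℝ) ≤ t⁻¹),
      ← ENNReal.ofReal_mul (by positivity : (0:ℝ) ≤ t ^ (1/p))]
    rw [ENNReal.ofReal_rpow_of_pos (by positivity)]
    rw [← ENNReal.ofReal_div_of_pos ht]
    congr 1
    rcases le_or_gt t a with h | h
    · rw [min_eq_left h, if_pos h]
      rw [show t ^ (1/p) * (t⁻¹ * (c * t)) = t ^ (1/p) * c by field_simp]
      rw [Real.mul_rpow (by positivity) hc.le]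
      rw [← Real.rpow_mul ht.le]
      rw [Real.rpow_sub ht, Real.rpow_one, show 1/p*q = q/p by ring]
      ring
    · rw [min_eq_right h.le, if_neg (not_le.mpr h)]
      rw [Real.mul_rpow (by positivity) (by positivity),
        Real.mul_rpow (by positivity) (by positivity),
        Real.mul_rpow (by positivity) (by positivity)]
      rw [← Real.rpow_neg_one t]
      rw [← Real.rpow_mul ht.le, ← Real.rpow_mul ht.le]
      rw [show q/p - q - 1 = 1/p*q + (-1*q + -1) by ring,
        Real.rpow_add ht, Real.rpow_add ht, Real.rpow_neg_one]
      ring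
  unfold lorentzQ
  rw [setLIntegral_congr_fun measurableSet_Ioi hpt]
  rw [← Set.Ioc_union_Ioi_eq_Ioi ha.le]
  rw [lintegral_union measurableSet_Ioi (Set.Ioc_disjoint_Ioi le_rfl)]
  have hJ1 : ∫⁻ t in Set.Ioc 0 a, ENNReal.ofReal (if t ≤ a then c ^ q * t ^ (q/p - 1)
      else c ^ q * a ^ q * t ^ (q/p - q - 1))
      = ENNReal.ofReal (c ^ q * (a ^ (q/p) * (p / q))) := by
    rw [setLIntegral_congr_fun measurableSet_Ioc (
      (fun t ht => by rw [if_pos ht.2]))]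
    have hint : IntegrableOn (fun t : ℝ => c ^ q * t ^ (q/p - 1)) (Set.Ioc 0 a) := by
      apply Integrable.const_mul
      exact (intervalIntegrable_iff_integrableOn_Ioc_of_le ha.le).mp
        (intervalIntegral.intervalIntegrable_rpow' (by linarith))
    rw [← MeasureTheory.ofReal_integral_eq_lintegral_ofReal hint]
    · congr 1
      rw [← intervalIntegral.integral_of_le ha.le]
      rw [intervalIntegral.integral_const_mul]
      rw [integral_rpow (Or.inl (by linarith))]
      rw [show q/p - 1 + 1 = q/p by ring]
      rw [Real.zero_rpow (ne_of_gt hr), sub_zero]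
      rw [div_eq_mul_inv, inv_div, ← mul_assoc]
    · filter_upwards [ae_restrict_mem measurableSet_Ioc] with t ht
      have : 0 < t := ht.1
      positivity
  have hJ2 : ∫⁻ t in Set.Ioi a, ENNReal.ofReal (if t ≤ a then c ^ q * t ^ (q/p - 1)
      else c ^ q * a ^ q * t ^ (q/p - q - 1))
      = ENNReal.ofReal ((c ^ q * a ^ q) * (a ^ (q/p - q) / (q - q/p))) := by
    rw [setLIntegral_congr_fun measurableSet_Ioi (
      (fun t ht => by rw [if_neg (not_le.mpr ht)]))]
    have hint : IntegrableOn (fun t : ℝ => c ^ q * a ^ q * t ^ (q/p - q - 1)) (Set.Ioi a) := by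
      apply Integrable.const_mul
      exact integrableOn_Ioi_rpow_of_lt (by linarith) ha
    rw [← MeasureTheory.ofReal_integral_eq_lintegral_ofReal hint]
    · congr 1
      rw [MeasureTheory.integral_const_mul]
      rw [integral_Ioi_rpow_of_lt (by linarith) ha]
      rw [show q/p - q - 1 + 1 = q/p - q by ring]
      rw [neg_div, ← div_neg]
      congr 2
      ring
    · filter_upwards [ae_restrict_mem measurableSet_Ioi] with t ht
      have : a < t := ht
      have : 0 < t := lt_trans ha this
      positivity
  rw [hJ1, hJ2]
  have hqq : 0 < q - q/p := by
    have : q/p < q := by rw [div_lt_iff₀ hp0]; nlinarith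
    linarith
  rw [← ENNReal.ofReal_add (by positivity)
    (mul_nonneg (by positivity) (div_nonneg (by positivity) hqq.le))]
  rw [← ENNReal.ofReal_mul (by positivity)]
  congr 1
  have haq2 : a ^ q * a ^ (q/p - q) = a ^ (q/p) := by
    rw [← Real.rpow_add ha, show q + (q/p - q) = q/p by ring]
  rw [show c ^ q * a ^ q * (a ^ (q/p - q) / (q - q/p))
      = c ^ q * (a ^ q * a ^ (q/p - q)) / (q - q/p) by ring, haq2]
  have hp1 : p - 1 ≠ 0 := by linarith
  rw [show q/p * (c ^ q * (a ^ (q/p) * (p/q)) + c ^ q * a ^ (q/p) / (q - q/p))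
      = c ^ q * a ^ (q/p) * (q/p * (p/q)) + c ^ q * a ^ (q/p) * (q/p / (q - q/p)) by ring]
  have e1 : q/p * (p/q) = 1 := by field_simp
  have e2 : q/p / (q - q/p) = 1/(p-1) := by
    rw [div_eq_div_iff hqq.ne' (by linarith : p - 1 ≠ 0)]
    field_simp
  rw [e1, e2]
  field_simp
  ring

lemma lorentzNorm_indicator {X : Type*} [MeasurableSpace X] (μ : Measure X) (B : Set X)
    (hB0 : μ B ≠ 0) (hBT : μ B ≠ ⊤) (c : ℝ) (hc : 0 < c)
    (p q : ℝ) (hp : 1 < p) (hq : 1 ≤ q) :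
    lorentzNorm μ (B.indicator fun _ => (c:ℂ)) p q
      = ENNReal.ofReal (c * (p / (p - 1)) ^ (1/q) * (μ B).toReal ^ (1/p)) := by
  have hq0 : 0 < q := by linarith
  have hK : (0:ℝ) < p / (p - 1) := div_pos (by linarith) (by linarith)
  have ha : 0 < (μ B).toReal := ENNReal.toReal_pos hB0 hBT
  unfold lorentzNorm
  rw [lorentzQ_indicator μ B hB0 hBT c hc p q hp hq]
  rw [ENNReal.ofReal_rpow_of_pos (by positivity)]
  congr 1
  rw [Real.mul_rpow (by positivity) (by positivity),
    Real.mul_rpow (by positivity) (by positivity)]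
  rw [← Real.rpow_mul hc.le, ← Real.rpow_mul ha.le]
  rw [show q * (1/q) = 1 by field_simp, show q / p * (1/q) = 1/p by
    field_simp]
  rw [Real.rpow_one]

lemma lorentzNorm_indicator_zero {X : Type*} [MeasurableSpace X] (μ : Measure X) (B : Set X)
    (hB0 : μ B = 0) (c : ℝ) (hc : 0 < c) (p q : ℝ) (hq0 : 0 < q) :
    lorentzNorm μ (B.indicator fun _ => (c:ℂ)) p q = 0 := by
  have hmax : ∀ t : ℝ, maxFun μ (B.indicator fun _ => (c:ℂ)) t = 0 := by
    intro t
    unfold maxFun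
    have : ∫⁻ s in Set.Ioc (0:ℝ) t, rearr μ (B.indicator fun _ => (c:ℂ)) s = 0 := by
      rw [setLIntegral_congr_fun measurableSet_Ioc (
        (fun s _ => ?_)), lintegral_zero]
      rw [rearr_indicator μ B c hc, hB0, if_neg (by simp)]
    rw [this, mul_zero]
  unfold lorentzNorm lorentzQ
  have : ∫⁻ t in Set.Ioi (0:ℝ),
      (ENNReal.ofReal (t ^ (1/p)) * maxFun μ (B.indicator fun _ => (c:ℂ)) t) ^ q
        / ENNReal.ofReal t = 0 := by
    rw [setLIntegral_congr_fun measurableSet_Ioi (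
      (fun t _ => ?_)), lintegral_zero]
    rw [hmax t, mul_zero, ENNReal.zero_rpow_of_pos hq0, ENNReal.zero_div]
  rw [this, mul_zero, ENNReal.zero_rpow_of_pos (by positivity)]

theorem stmt_14' {X : Type*} [MeasurableSpace X] [Nonempty X] (μ : Measure X) [SigmaFinite μ]
    (τ : X → X) (hτ : Measurable τ)
    (p q : ℝ) (hp : 1 < p) (hq : 1 ≤ q)
    (hexp : ∀ M : ℝ, 0 < M → ∃ N : ℕ, ∀ n ≥ N, ∀ g : X → ℂ, Measurable g →
      lorentzNorm μ g p q = 1 → ENNReal.ofReal M ≤ lorentzNorm μ (g ∘ τ^[n]) p q) :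
    ∀ M : ℝ, 0 < M → ∃ N : ℕ, ∀ n ≥ N, ∀ A : Set X, MeasurableSet A →
      0 < μ A → μ A < ⊤ → ENNReal.ofReal M * μ A ≤ μ ((τ^[n]) ⁻¹' A) := by
  intro M hM
  have hp0 : 0 < p := by linarith
  have hq0 : 0 < q := by linarith
  set M₁ := M ^ (1/p) with hM₁def
  have hM₁ : 0 < M₁ := Real.rpow_pos_of_pos hM _
  obtain ⟨N, hN⟩ := hexp M₁ hM₁
  refine ⟨N, fun n hn A hA hA0 hAT => ?_⟩
  set K : ℝ := (p / (p - 1)) ^ (1/q) with hKdef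
  have hK : 0 < K := Real.rpow_pos_of_pos (div_pos (by linarith) (by linarith)) _
  set a : ℝ := (μ A).toReal with hadef
  have ha : 0 < a := ENNReal.toReal_pos hA0.ne' hAT.ne
  set c : ℝ := (K * a ^ (1/p))⁻¹ with hcdef
  have hc : 0 < c := by positivity
  set g : X → ℂ := A.indicator fun _ => (c:ℂ) with hgdef
  have hgm : Measurable g := measurable_const.indicator hA
  have hg1 : lorentzNorm μ g p q = 1 := by
    rw [hgdef, lorentzNorm_indicator μ A hA0.ne' hAT.ne c hc p q hp hq]
    rw [show c * (p / (p - 1)) ^ (1/q) * (μ A).toReal ^ (1/p)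
        = c * (K * a ^ (1/p)) by rw [hKdef, hadef]; ring]
    rw [hcdef, inv_mul_cancel₀ (by positivity), ENNReal.ofReal_one]
  have hcomp : g ∘ τ^[n] = (τ^[n] ⁻¹' A).indicator fun _ => (c:ℂ) := by
    funext x
    by_cases hx : τ^[n] x ∈ A <;>
      simp [hgdef, Set.indicator, Function.comp, hx, Set.mem_preimage]
  have hle := hN n hn g hgm hg1
  rw [hcomp] at hle
  set b := μ (τ^[n] ⁻¹' A) with hbdef
  rcases eq_top_or_lt_top b with hb | hb
  · rw [hb]; exact le_top
  have hb0 : b ≠ 0 := by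
    intro h0
    rw [lorentzNorm_indicator_zero μ _ h0 c hc p q hq0] at hle
    exact (ENNReal.ofReal_pos.mpr hM₁).not_ge hle
  rw [lorentzNorm_indicator μ _ hb0 hb.ne c hc p q hp hq] at hle
  set bt : ℝ := b.toReal with hbtdef
  have hbt : 0 < bt := ENNReal.toReal_pos hb0 hb.ne
  have h1 : M₁ ≤ c * K * bt ^ (1/p) := by
    rw [← ENNReal.ofReal_le_ofReal_iff (by positivity)]
    exact hle
  have hcK : c * K = (a ^ (1/p))⁻¹ := by
    rw [hcdef, mul_inv, mul_comm, ← mul_assoc, mul_inv_cancel₀ hK.ne', one_mul]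
  rw [hcK] at h1
  have h2 : M ≤ bt / a := by
    have h3 : M₁ ^ p ≤ ((a ^ (1/p))⁻¹ * bt ^ (1/p)) ^ p :=
      Real.rpow_le_rpow hM₁.le h1 hp0.le
    rw [hM₁def, ← Real.rpow_mul hM.le, one_div_mul_cancel hp0.ne', Real.rpow_one] at h3
    rw [Real.mul_rpow (by positivity) (by positivity)] at h3
    calc M ≤ ((a ^ (1/p))⁻¹) ^ p * (bt ^ (1/p)) ^ p := h3
      _ = bt / a := by
        rw [← Real.rpow_neg_one (a ^ (1/p)), ← Real.rpow_mul ha.le,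
          ← Real.rpow_mul ha.le, ← Real.rpow_mul hbt.le]
        rw [show 1/p * -1 * p = -1 by field_simp, show 1/p * p = 1 by field_simp]
        rw [Real.rpow_neg_one, Real.rpow_one]
        ring
  have h4 : M * a ≤ bt := (le_div_iff₀ ha).mp h2
  have hμA : μ A = ENNReal.ofReal a := by rw [hadef, ENNReal.ofReal_toReal hAT.ne]
  have hμb : b = ENNReal.ofReal bt := by rw [hbtdef, ENNReal.ofReal_toReal hb.ne]
  calc ENNReal.ofReal M * μ A = ENNReal.ofReal (M * a) := by
        rw [hμA, ← ENNReal.ofReal_mul hM.le]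
    _ ≤ ENNReal.ofReal bt := ENNReal.ofReal_le_ofReal h4
    _ = b := hμb.symm

/-- if `C_τ` is uniformly positively expansive then
`μ(τ^{-n}(A))/μ(A) → ∞` uniformly over `A` with `0 < μ(A) < ∞`. -/
theorem stmt_14 {X : Type*} [MeasurableSpace X] [Nonempty X] (μ : Measure X) [SigmaFinite μ]
    (τ : X → X) (hbij : Function.Bijective τ) (hτ : Measurable τ)
    (hbi : ∀ A : Set X, MeasurableSet A → MeasurableSet (τ '' A))
    (hns : Nonsingular μ τ)
    (hns' : ∀ A : Set X, MeasurableSet A → μ A = 0 → μ (τ '' A) = 0)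
    (p q : ℝ) (hp : 1 < p) (hq : 1 ≤ q)
    (hbdd : ∃ C : ℝ≥0∞, C < ⊤ ∧
      ∀ g : X → ℂ, lorentzNorm μ (g ∘ τ) p q ≤ C * lorentzNorm μ g p q)
    (hbdd' : ∃ C : ℝ≥0∞, C < ⊤ ∧
      ∀ g : X → ℂ, lorentzNorm μ (fun x => g ((Function.invFun τ) x)) p q ≤
        C * lorentzNorm μ g p q)
    (hexp : ∀ M : ℝ, 0 < M → ∃ N : ℕ, ∀ n ≥ N, ∀ g : X → ℂ, Measurable g →
      lorentzNorm μ g p q = 1 → ENNReal.ofReal M ≤ lorentzNorm μ (g ∘ τ^[n]) p q) :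
    ∀ M : ℝ, 0 < M → ∃ N : ℕ, ∀ n ≥ N, ∀ A : Set X, MeasurableSet A →
      0 < μ A → μ A < ⊤ → ENNReal.ofReal M * μ A ≤ μ ((τ^[n]) ⁻¹' A) := by
  exact stmt_14' μ τ hτ p q hp hq hexp
end

section
/- Suppose (X, 𝔄, μ) is a purely atomic σ-finite measure space with atoms (A_k) each of positive finite measure, and τ is a non-singular transformation mapping atoms to unions of atoms. If for every M > 0 there exists m ∈ ℕ such that μ(τ^{-n}(A_k)) ≥ M·μ(A_k) for all n ≥ m and all atoms A_k, then for every simple function g ∈ L^{pq}(X) with ‖g‖_{pq} = 1 and all n ≥ m, ‖C_τ^n g‖_{pq}^p ≥ M. -/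
open MeasureTheory Filter Set
open scoped ENNReal NNReal

lemma rearr_anti {X : Type*} [MeasurableSpace X] (μ : Measure X) (g : X → ℂ) :
    Antitone (rearr μ g) := fun _ _ hab =>
  sInf_le_sInf fun _ hl => le_trans hl (ENNReal.ofReal_le_ofReal hab)

lemma maxFun_meas {X : Type*} [MeasurableSpace X] (μ : Measure X) (g : X → ℂ) :
    Measurable (maxFun μ g) := by
  apply Measurable.mul
  · exact (ENNReal.measurable_ofReal).inv
  · have : Monotone (fun t => ∫⁻ s in Set.Ioc (0:ℝ) t, rearr μ g s) := fun a b hab =>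
      lintegral_mono' (Measure.restrict_mono (Set.Ioc_subset_Ioc_right hab) le_rfl) le_rfl
    exact this.measurable

/-- scaling change of variables for lintegral on ℝ -/
lemma lint_scale (f : ℝ → ℝ≥0∞) (hf : Measurable f) {M : ℝ} (hM : 0 < M) {s : Set ℝ}
    (hs : MeasurableSet s) :
    ∫⁻ y in s, f y = ENNReal.ofReal M * ∫⁻ x in (M * ·) ⁻¹' s, f (M * x) := by
  have hMne : (M : ℝ) ≠ 0 := ne_of_gt hM
  have hmap := Real.map_volume_mul_left hMne
  have h1 : ∫⁻ x in (M * ·) ⁻¹' s, f (M * x)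
      = ∫⁻ y in s, f y ∂(Measure.map (M * ·) volume) := by
    rw [Measure.restrict_map (measurable_const_mul M) hs,
      lintegral_map hf (measurable_const_mul M)]
  rw [h1, hmap]
  simp only [Measure.restrict_smul, lintegral_smul_measure, ← mul_assoc]
  rw [abs_of_pos (inv_pos.mpr hM), smul_eq_mul, ← mul_assoc, ← ENNReal.ofReal_mul hM.le, mul_inv_cancel₀ hMne,
    ENNReal.ofReal_one, one_mul]

lemma dist_ineq {X : Type*} [MeasurableSpace X] (μ : Measure X)
    (A : ℕ → Set X) (hmeas : ∀ k, MeasurableSet (A k))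
    (hdisj : Pairwise (Function.onFun Disjoint A))
    (hcover : (⋃ k, A k) = Set.univ)
    (T : X → X) (hT : Measurable T)
    (M : ℝ)
    (hexp : ∀ k, ENNReal.ofReal M * μ (A k) ≤ μ (T ⁻¹' (A k)))
    (g : X → ℂ) (hconst : ∀ k, ∀ x ∈ A k, ∀ y ∈ A k, g x = g y)
    (l : ℝ≥0∞) :
    ENNReal.ofReal M * μ {x | l < (‖g x‖₊ : ℝ≥0∞)}
      ≤ μ {x | l < (‖(g ∘ T) x‖₊ : ℝ≥0∞)} := by
  set S : Set X := {x | l < (‖g x‖₊ : ℝ≥0∞)} with hSdef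
  have hpre : {x | l < (‖(g ∘ T) x‖₊ : ℝ≥0∞)} = T ⁻¹' S := rfl
  set K : Set ℕ := {k | A k ⊆ S} with hKdef
  have hS : S = ⋃ k ∈ K, A k := by
    ext x
    constructor
    · intro hx
      have : x ∈ ⋃ k, A k := by rw [hcover]; trivial
      obtain ⟨k, hk⟩ := Set.mem_iUnion.mp this
      have hkK : k ∈ K := by
        intro y hy
        have : g y = g x := hconst k y hy x hk
        simpa [hSdef, this] using hx
      exact Set.mem_biUnion hkK hk
    · intro hx
      obtain ⟨k, hk, hxk⟩ := Set.mem_iUnion₂.mp hx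
      exact hk hxk
  have hKc : K.Countable := K.to_countable
  have hμS : μ S = ∑' k : K, μ (A k) := by
    rw [hS]
    exact measure_biUnion hKc (hdisj.set_pairwise K) (fun k _ => hmeas k)
  have hμT : μ (T ⁻¹' S) = ∑' k : K, μ (T ⁻¹' (A k)) := by
    have : T ⁻¹' S = ⋃ k ∈ K, T ⁻¹' (A k) := by rw [hS]; simp [Set.preimage_iUnion]
    rw [this]
    refine measure_biUnion hKc ?_ (fun k _ => hT (hmeas k))
    intro i hi j hj hij
    exact (hdisj hij).preimage T
  rw [hpre, hμT, hμS, ← ENNReal.tsum_mul_left]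
  exact ENNReal.tsum_le_tsum fun k => hexp k

lemma rearr_bound {X : Type*} [MeasurableSpace X] (μ : Measure X) (g C : X → ℂ)
    {M : ℝ} (hM : 0 < M)
    (hdist : ∀ l : ℝ≥0∞, ENNReal.ofReal M * μ {x | l < (‖g x‖₊ : ℝ≥0∞)}
      ≤ μ {x | l < (‖C x‖₊ : ℝ≥0∞)}) (t : ℝ) :
    rearr μ g (t / M) ≤ rearr μ C t := by
  apply sInf_le_sInf
  intro l hl
  simp only [Set.mem_setOf_eq] at hl ⊢
  have h1 : ENNReal.ofReal M * μ {x | l < (‖g x‖₊ : ℝ≥0∞)} ≤ ENNReal.ofReal t :=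
    le_trans (hdist l) hl
  rw [ENNReal.ofReal_div_of_pos hM]
  have hMne : ENNReal.ofReal M ≠ 0 := by
    simp [ENNReal.ofReal_eq_zero, not_le, hM]
  rw [ENNReal.le_div_iff_mul_le (Or.inl hMne) (Or.inl ENNReal.ofReal_ne_top)]
  rwa [mul_comm]

lemma maxFun_bound {X : Type*} [MeasurableSpace X] (μ : Measure X) (g C : X → ℂ)
    {M : ℝ} (hM : 0 < M)
    (hre : ∀ t : ℝ, rearr μ g (t / M) ≤ rearr μ C t)
    (u : ℝ) :
    maxFun μ g u ≤ maxFun μ C (M * u) := by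
  have hMne : ENNReal.ofReal M ≠ 0 := by simp [ENNReal.ofReal_eq_zero, not_le, hM]
  have step1 : ∫⁻ s in Set.Ioc (0:ℝ) (M * u), rearr μ g (s / M)
      ≤ ∫⁻ s in Set.Ioc (0:ℝ) (M * u), rearr μ C s :=
    lintegral_mono fun s => hre s
  have hmeasf : Measurable (fun s : ℝ => rearr μ g (s / M)) := by
    have : Antitone (fun s : ℝ => rearr μ g (s / M)) := fun a b hab =>
      rearr_anti μ g ((div_le_div_iff_of_pos_right hM).mpr hab)
    exact this.measurable
  have hpre : (M * ·) ⁻¹' Set.Ioc (0:ℝ) (M * u) = Set.Ioc (0:ℝ) u := by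
    rw [Set.preimage_const_mul_Ioc₀ _ _ hM]
    rw [zero_div, mul_div_cancel_left₀ _ (ne_of_gt hM)]
  have step2 : ∫⁻ s in Set.Ioc (0:ℝ) (M * u), rearr μ g (s / M)
      = ENNReal.ofReal M * ∫⁻ x in Set.Ioc (0:ℝ) u, rearr μ g x := by
    rw [lint_scale _ hmeasf hM measurableSet_Ioc, hpre]
    congr 1
    refine setLIntegral_congr_fun measurableSet_Ioc ?_
    intro x _
    beta_reduce
    rw [mul_div_cancel_left₀ _ (ne_of_gt hM)]
  have key : ENNReal.ofReal M * ∫⁻ x in Set.Ioc (0:ℝ) u, rearr μ g x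
      ≤ ∫⁻ s in Set.Ioc (0:ℝ) (M * u), rearr μ C s := step2 ▸ step1
  unfold maxFun
  calc (ENNReal.ofReal u)⁻¹ * ∫⁻ s in Set.Ioc (0:ℝ) u, rearr μ g s
      = (ENNReal.ofReal (M * u))⁻¹ *
        (ENNReal.ofReal M * ∫⁻ s in Set.Ioc (0:ℝ) u, rearr μ g s) := by
        rw [ENNReal.ofReal_mul hM.le,
          ENNReal.mul_inv (Or.inl hMne) (Or.inl ENNReal.ofReal_ne_top), mul_assoc,
          ← mul_assoc (ENNReal.ofReal u)⁻¹, mul_comm (ENNReal.ofReal u)⁻¹ (ENNReal.ofReal M),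
          ← mul_assoc, ← mul_assoc,
          ENNReal.inv_mul_cancel hMne ENNReal.ofReal_ne_top, one_mul]
    _ ≤ (ENNReal.ofReal (M * u))⁻¹ * ∫⁻ s in Set.Ioc (0:ℝ) (M * u), rearr μ C s :=
        mul_le_mul_right key _

/-- on a purely atomic space, if `μ(τ^{-n}(A_k)) ≥ M μ(A_k)` for all
`n ≥ m` and all atoms, then every simple unit vector `g` satisfies
`‖C_τ^n g‖_{pq}^p ≥ M` for all `n ≥ m`. -/
theorem stmt_15 {X : Type*} [MeasurableSpace X] (μ : Measure X) [SigmaFinite μ]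
    (A : ℕ → Set X) (hmeas : ∀ k, MeasurableSet (A k))
    (hpos : ∀ k, 0 < μ (A k)) (hfin : ∀ k, μ (A k) < ⊤)
    (hdisj : Pairwise (Function.onFun Disjoint A))
    (hcover : (⋃ k, A k) = Set.univ)
    (hatoms : ∀ k, ∀ B : Set X, MeasurableSet B → B ⊆ A k → μ B = 0 ∨ μ B = μ (A k))
    (τ : X → X) (hns : Nonsingular μ τ)
    (hunions : ∀ k, ∃ S : Set ℕ, τ ⁻¹' (A k) = ⋃ j ∈ S, A j)
    (p q : ℝ) (hp : 1 < p) (hq : 1 ≤ q)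
    (M : ℝ) (hM : 0 < M) (m : ℕ)
    (hexp : ∀ n ≥ m, ∀ k, ENNReal.ofReal M * μ (A k) ≤ μ ((τ^[n]) ⁻¹' (A k))) :
    ∀ g : X → ℂ, Measurable g →
      (∀ k, ∀ x ∈ A k, ∀ y ∈ A k, g x = g y) →
      lorentzNorm μ g p q = 1 →
      ∀ n ≥ m, ENNReal.ofReal M ≤ lorentzNorm μ (g ∘ τ^[n]) p q ^ p := by
  intro g hgm hconst hnorm n hn
  have hp0 : (0:ℝ) < p := lt_trans one_pos hp
  have hq0 : (0:ℝ) < q := lt_of_lt_of_le one_pos hq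
  set C : X → ℂ := g ∘ τ^[n] with hCdef
  set cM : ℝ≥0∞ := ENNReal.ofReal M with hcM
  set cP : ℝ≥0∞ := ENNReal.ofReal (M ^ (1/p)) with hcP
  have hMne : cM ≠ 0 := by simp [hcM, ENNReal.ofReal_eq_zero, not_le, hM]
  have hMnt : cM ≠ ⊤ := ENNReal.ofReal_ne_top
  have hPnt : cP ≠ ⊤ := ENNReal.ofReal_ne_top
  -- distribution inequality
  have hdist : ∀ l : ℝ≥0∞, cM * μ {x | l < (‖g x‖₊ : ℝ≥0∞)}
      ≤ μ {x | l < (‖C x‖₊ : ℝ≥0∞)} :=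
    dist_ineq μ A hmeas hdisj hcover (τ^[n]) (hns.1.iterate n) M (hexp n hn) g hconst
  have hre : ∀ t : ℝ, rearr μ g (t / M) ≤ rearr μ C t := rearr_bound μ g C hM hdist
  have hmax : ∀ u : ℝ, maxFun μ g u ≤ maxFun μ C (M * u) := maxFun_bound μ g C hM hre
  -- the integrand for C
  set F : ℝ → ℝ≥0∞ := fun t =>
    (ENNReal.ofReal (t ^ (1/p)) * maxFun μ C t) ^ q / ENNReal.ofReal t with hFdef
  set G : ℝ → ℝ≥0∞ := fun t =>
    (ENNReal.ofReal (t ^ (1/p)) * maxFun μ g t) ^ q / ENNReal.ofReal t with hGdef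
  have hFmeas : Measurable F := by
    apply Measurable.div
    · apply Measurable.pow_const
      exact (ENNReal.measurable_ofReal.comp (by fun_prop : Measurable fun t : ℝ => t ^ (1/p))).mul
        (maxFun_meas μ C)
    · exact ENNReal.measurable_ofReal
  have hIoi : (M * ·) ⁻¹' Set.Ioi (0:ℝ) = Set.Ioi 0 := by
    rw [Set.preimage_const_mul_Ioi₀ _ hM, zero_div]
  -- change of variables
  have hJ : ∫⁻ t in Set.Ioi (0:ℝ), F t
      = cM * ∫⁻ u in Set.Ioi (0:ℝ), F (M * u) := by
    rw [lint_scale F hFmeas hM measurableSet_Ioi, hIoi]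
  -- pointwise bound
  have hpt : ∀ u ∈ Set.Ioi (0:ℝ), cP ^ q * cM⁻¹ * G u ≤ F (M * u) := by
    intro u hu
    have hu0 : (0:ℝ) < u := hu
    set E : ℝ≥0∞ := ENNReal.ofReal (u ^ (1/p)) * maxFun μ g u with hE
    have e1 : ENNReal.ofReal ((M * u) ^ (1/p)) = cP * ENNReal.ofReal (u ^ (1/p)) := by
      rw [Real.mul_rpow hM.le hu0.le, ENNReal.ofReal_mul (Real.rpow_nonneg hM.le _)]
    have e2 : ENNReal.ofReal (M * u) = cM * ENNReal.ofReal u := ENNReal.ofReal_mul hM.le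
    have hnum : cP ^ q * E ^ q ≤ (ENNReal.ofReal ((M * u) ^ (1/p)) * maxFun μ C (M * u)) ^ q := by
      rw [← ENNReal.mul_rpow_of_nonneg _ _ hq0.le]
      refine ENNReal.rpow_le_rpow ?_ hq0.le
      rw [e1, hE, mul_assoc]
      exact mul_le_mul_right (mul_le_mul_right (hmax u) _) _
    have hFMu : F (M * u)
        = (ENNReal.ofReal ((M * u) ^ (1/p)) * maxFun μ C (M * u)) ^ q
          * (cM⁻¹ * (ENNReal.ofReal u)⁻¹) := by
      rw [hFdef]
      simp only
      rw [e2, div_eq_mul_inv, ENNReal.mul_inv (Or.inl hMne) (Or.inl ENNReal.ofReal_ne_top)]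
    calc cP ^ q * cM⁻¹ * G u
        = (cP ^ q * E ^ q) * (cM⁻¹ * (ENNReal.ofReal u)⁻¹) := by
          rw [hGdef]; simp only [← hE]; simp only [div_eq_mul_inv]; ring
      _ ≤ (ENNReal.ofReal ((M * u) ^ (1/p)) * maxFun μ C (M * u)) ^ q
          * (cM⁻¹ * (ENNReal.ofReal u)⁻¹) := mul_le_mul_left hnum _
      _ = F (M * u) := hFMu.symm
  -- integrate the pointwise bound
  have hcne : cP ^ q * cM⁻¹ ≠ ⊤ :=
    ENNReal.mul_ne_top (ENNReal.rpow_ne_top_of_nonneg hq0.le hPnt) (ENNReal.inv_ne_top.mpr hMne)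
  have hint : cP ^ q * cM⁻¹ * ∫⁻ u in Set.Ioi (0:ℝ), G u
      ≤ ∫⁻ u in Set.Ioi (0:ℝ), F (M * u) := by
    rw [← lintegral_const_mul' _ _ hcne]
    exact setLIntegral_mono' measurableSet_Ioi hpt
  have hQ : cP ^ q * lorentzQ μ g p q ≤ lorentzQ μ C p q := by
    unfold lorentzQ
    rw [hJ]
    calc cP ^ q * (ENNReal.ofReal (q / p) * ∫⁻ u in Set.Ioi (0:ℝ), G u)
        = ENNReal.ofReal (q / p) * (cP ^ q * ∫⁻ u in Set.Ioi (0:ℝ), G u) := by ring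
      _ = ENNReal.ofReal (q / p) * (cM * (cP ^ q * cM⁻¹ * ∫⁻ u in Set.Ioi (0:ℝ), G u)) := by
          have hcc : cM * (cP ^ q * cM⁻¹) = cP ^ q := by
            rw [mul_comm (cP ^ q) cM⁻¹, ← mul_assoc, ENNReal.mul_inv_cancel hMne hMnt, one_mul]
          rw [← mul_assoc cM (cP ^ q * cM⁻¹), hcc]
      _ ≤ ENNReal.ofReal (q / p) * (cM * ∫⁻ u in Set.Ioi (0:ℝ), F (M * u)) := by
          exact mul_le_mul_right (mul_le_mul_right hint _) _
  -- lorentzQ g = 1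
  have hQg : lorentzQ μ g p q = 1 := by
    have h1 : (lorentzQ μ g p q ^ (1/q)) ^ q = (1:ℝ≥0∞) ^ q := by
      have h2 : lorentzNorm μ g p q ^ q = (1:ℝ≥0∞) ^ q := by rw [hnorm]
      simpa only [lorentzNorm] using h2
    rwa [← ENNReal.rpow_mul, one_div, inv_mul_cancel₀ (ne_of_gt hq0), ENNReal.rpow_one,
      ENNReal.one_rpow] at h1
  have hQC : cP ^ q ≤ lorentzQ μ C p q := by
    calc cP ^ q = cP ^ q * lorentzQ μ g p q := by rw [hQg, mul_one]
      _ ≤ lorentzQ μ C p q := hQ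
  -- pass to norms
  have hNC : cP ≤ lorentzNorm μ C p q := by
    unfold lorentzNorm
    calc cP = (cP ^ q) ^ (1/q) := by
          rw [← ENNReal.rpow_mul, mul_one_div, div_self (ne_of_gt hq0), ENNReal.rpow_one]
      _ ≤ lorentzQ μ C p q ^ (1/q) :=
          ENNReal.rpow_le_rpow hQC (by positivity)
  calc ENNReal.ofReal M = cP ^ p := by
        rw [hcP, ENNReal.ofReal_rpow_of_pos (Real.rpow_pos_of_pos hM _),
          ← Real.rpow_mul hM.le, one_div, inv_mul_cancel₀ (ne_of_gt hp0), Real.rpow_one]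
    _ ≤ lorentzNorm μ C p q ^ p := ENNReal.rpow_le_rpow hNC hp0.le
end

section
/- Let (X, 𝔄, μ) be a measure space, τ : X → X non-singular with C_τ bounded on L^{pq}(X) (1 < p < ∞, 1 ≤ q < ∞), and suppose g ∈ L^{pq}(X) is nonzero with liminf_{n→∞} ‖C_τ^n g‖_{pq} = 0. Then there exists a measurable set A with 0 < μ(A) < ∞ and liminf_{n→∞} μ(τ^{-n}(A)) = 0. -/
open MeasureTheory Filter Set
open scoped ENNReal NNReal

lemma key {X : Type*} [MeasurableSpace X] (μ : Measure X) (h : X → ℂ)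
    {p q : ℝ} (hp : 1 < p) (hq : 1 ≤ q) {c : ℝ≥0} (hc : 0 < c)
    {t0 : ℝ} (ht0 : 0 < t0)
    (hm : ENNReal.ofReal t0 < μ {x | (c : ℝ≥0∞) < (‖h x‖₊ : ℝ≥0∞)}) :
    ENNReal.ofReal ((q/p) * ((t0/2)^(1/p) * (c:ℝ))^q * (1/2)) ≤ lorentzQ μ h p q := by
  have hp0 : (0:ℝ) < p := lt_trans one_pos hp
  have hq0 : (0:ℝ) < q := lt_of_lt_of_le one_pos hq
  have hc0 : (0:ℝ) < (c:ℝ) := hc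
  have ht02 : 0 < t0/2 := by linarith
  -- Step A: rearrangement lower bound
  have hA : ∀ s : ℝ, s ≤ t0 → (c : ℝ≥0∞) ≤ rearr μ h s := by
    intro s hs
    refine le_sInf fun l hl => ?_
    by_contra hlt
    push_neg at hlt
    have hsub : {x | (c : ℝ≥0∞) < (‖h x‖₊ : ℝ≥0∞)} ⊆ {x | l < (‖h x‖₊ : ℝ≥0∞)} :=
      fun x hx => lt_trans hlt hx
    have h1 : μ {x | (c : ℝ≥0∞) < (‖h x‖₊ : ℝ≥0∞)} ≤ ENNReal.ofReal s :=
      (measure_mono hsub).trans hl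
    exact lt_irrefl _ (hm.trans_le (h1.trans (ENNReal.ofReal_le_ofReal hs)))
  -- Step B: maximal function lower bound
  have hB : ∀ t : ℝ, 0 < t → t ≤ t0 → (c : ℝ≥0∞) ≤ maxFun μ h t := by
    intro t ht htle
    have h1 : (c : ℝ≥0∞) * ENNReal.ofReal t ≤ ∫⁻ s in Set.Ioc (0:ℝ) t, rearr μ h s := by
      calc (c : ℝ≥0∞) * ENNReal.ofReal t = ∫⁻ _ in Set.Ioc (0:ℝ) t, (c:ℝ≥0∞) := by
            rw [setLIntegral_const, Real.volume_Ioc, sub_zero]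
        _ ≤ _ := setLIntegral_mono' measurableSet_Ioc (fun s hs => hA s (hs.2.trans htle))
    have h2 : (ENNReal.ofReal t)⁻¹ * ((c : ℝ≥0∞) * ENNReal.ofReal t) = (c:ℝ≥0∞) := by
      rw [mul_comm (c:ℝ≥0∞), ← mul_assoc, ENNReal.inv_mul_cancel
        (ENNReal.ofReal_pos.2 ht).ne' ENNReal.ofReal_ne_top, one_mul]
    calc (c:ℝ≥0∞) = (ENNReal.ofReal t)⁻¹ * ((c : ℝ≥0∞) * ENNReal.ofReal t) := h2.symm
      _ ≤ maxFun μ h t := mul_le_mul_right h1 _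
  -- Step C
  set K : ℝ≥0∞ := (ENNReal.ofReal ((t0/2)^(1/p)) * (c:ℝ≥0∞))^q / ENNReal.ofReal t0 with hK
  have hC1 : ∀ t ∈ Set.Ioc (t0/2) t0,
      K ≤ (ENNReal.ofReal (t ^ (1/p)) * maxFun μ h t) ^ q / ENNReal.ofReal t := by
    intro t ht
    have ht' : 0 < t := lt_trans ht02 ht.1
    refine ENNReal.div_le_div ?_ (ENNReal.ofReal_le_ofReal ht.2)
    refine ENNReal.rpow_le_rpow ?_ hq0.le
    exact mul_le_mul' (ENNReal.ofReal_le_ofReal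
      (Real.rpow_le_rpow ht02.le ht.1.le (by positivity))) (hB t ht' ht.2)
  have hC2 : K * ENNReal.ofReal (t0/2) ≤
      ∫⁻ t in Set.Ioi (0:ℝ), (ENNReal.ofReal (t ^ (1/p)) * maxFun μ h t) ^ q / ENNReal.ofReal t := by
    have he : t0 - t0/2 = t0/2 := by ring
    calc K * ENNReal.ofReal (t0/2) = ∫⁻ _ in Set.Ioc (t0/2) t0, K := by
          rw [setLIntegral_const, Real.volume_Ioc, he]
      _ ≤ ∫⁻ t in Set.Ioc (t0/2) t0, (ENNReal.ofReal (t ^ (1/p)) * maxFun μ h t) ^ q / ENNReal.ofReal t :=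
          setLIntegral_mono' measurableSet_Ioc hC1
      _ ≤ _ := lintegral_mono_set (fun x hx => lt_of_le_of_lt ht02.le hx.1)
  have hmain : ENNReal.ofReal (q/p) * (K * ENNReal.ofReal (t0/2)) ≤ lorentzQ μ h p q :=
    mul_le_mul_right hC2 _
  refine le_trans (le_of_eq ?_) hmain
  have hB0 : (0:ℝ) < (t0/2)^(1/p) * (c:ℝ) := by positivity
  rw [hK, ← ENNReal.ofReal_coe_nnreal, ← ENNReal.ofReal_mul (by positivity),
    ENNReal.ofReal_rpow_of_pos hB0, ← ENNReal.ofReal_div_of_pos ht0,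
    ← ENNReal.ofReal_mul (by positivity), ← ENNReal.ofReal_mul (by positivity)]
  congr 1
  field_simp

/-- if `g ≠ 0` in `L^{pq}` and `liminf ‖C_τ^n g‖_{pq} = 0`, then there
is a measurable `A` with `0 < μ(A) < ∞` and `liminf μ(τ^{-n}A) = 0`. -/
theorem stmt_18 {X : Type*} [MeasurableSpace X] (μ : Measure X)
    (τ : X → X) (hns : Nonsingular μ τ)
    (p q : ℝ) (hp : 1 < p) (hq : 1 ≤ q)
    (hbdd : ∃ C : ℝ≥0∞, C < ⊤ ∧
      ∀ g : X → ℂ, lorentzNorm μ (g ∘ τ) p q ≤ C * lorentzNorm μ g p q)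
    (g : X → ℂ) (hg : Measurable g) (hne : ¬ g =ᵐ[μ] 0)
    (hfin : lorentzNorm μ g p q < ⊤)
    (h0 : Filter.liminf (fun n : ℕ => lorentzNorm μ (g ∘ τ^[n]) p q) Filter.atTop = 0) :
    ∃ A : Set X, MeasurableSet A ∧ 0 < μ A ∧ μ A < ⊤ ∧
      Filter.liminf (fun n : ℕ => μ ((τ^[n]) ⁻¹' A)) Filter.atTop = 0 := by
  have hp0 : (0:ℝ) < p := lt_trans one_pos hp
  have hq0 : (0:ℝ) < q := lt_of_lt_of_le one_pos hq
  -- choose c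
  obtain ⟨k, hk⟩ : ∃ k : ℕ, μ {x | (((((k:ℝ≥0)+1)⁻¹ : ℝ≥0)) : ℝ≥0∞) < (‖g x‖₊ : ℝ≥0∞)} ≠ 0 := by
    by_contra hall
    push_neg at hall
    apply hne
    have hsub : {x | g x ≠ 0} ⊆
        ⋃ k : ℕ, {x | (((((k:ℝ≥0)+1)⁻¹ : ℝ≥0)) : ℝ≥0∞) < (‖g x‖₊ : ℝ≥0∞)} := by
      intro x hx
      have hpos : (0:ℝ≥0∞) < (‖g x‖₊ : ℝ≥0∞) := by
        simpa [pos_iff_ne_zero] using hx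
      obtain ⟨n, hn⟩ := ENNReal.exists_inv_nat_lt hpos.ne'
      refine Set.mem_iUnion.2 ⟨n, ?_⟩
      have hcoe : (((((n:ℝ≥0)+1)⁻¹ : ℝ≥0)) : ℝ≥0∞) = ((n:ℝ≥0∞)+1)⁻¹ := by
        rw [ENNReal.coe_inv (by positivity)]
        push_cast
        rfl
      have hle : ((n:ℝ≥0∞)+1)⁻¹ ≤ (n:ℝ≥0∞)⁻¹ :=
        ENNReal.inv_le_inv' (le_add_of_nonneg_right zero_le_one)
      exact lt_of_le_of_lt (hcoe ▸ hle) hn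
    have hnull : μ {x | g x ≠ 0} = 0 :=
      measure_mono_null hsub (by simpa [measure_iUnion_null_iff] using hall)
    exact hnull
  set c : ℝ≥0 := ((k:ℝ≥0)+1)⁻¹ with hcdef
  have hc : 0 < c := by positivity
  have hc0 : (0:ℝ) < (c:ℝ) := hc
  set A : Set X := {x | (c : ℝ≥0∞) < (‖g x‖₊ : ℝ≥0∞)} with hAdef
  have hAmeas : MeasurableSet A :=
    measurableSet_lt measurable_const hg.nnnorm.coe_nnreal_ennreal
  have hApos : 0 < μ A := pos_iff_ne_zero.2 hk
  have hAfin : μ A < ⊤ := by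
    by_contra htop
    push_neg at htop
    have htop' : μ A = ⊤ := top_le_iff.1 htop
    have hQtop : lorentzQ μ g p q = ⊤ := by
      apply ENNReal.eq_top_of_forall_nnreal_le
      intro r
      have hE : Tendsto (fun t : ℝ => (q/p) * ((t/2)^(1/p) * (c:ℝ))^q * (1/2)) atTop atTop := by
        have h1 : Tendsto (fun t : ℝ => t/2) atTop atTop :=
          tendsto_id.atTop_div_const (by norm_num)
        have h2 : Tendsto (fun s : ℝ => s^(1/p)) atTop atTop :=
          tendsto_rpow_atTop (by positivity)
        have h3 : Tendsto (fun t : ℝ => (t/2)^(1/p) * (c:ℝ)) atTop atTop :=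
          (h2.comp h1).atTop_mul_const hc0
        have h4 : Tendsto (fun s : ℝ => s^q) atTop atTop := tendsto_rpow_atTop hq0
        have h5 : Tendsto (fun t : ℝ => ((t/2)^(1/p) * (c:ℝ))^q) atTop atTop := h4.comp h3
        have h6 : Tendsto (fun t : ℝ => (q/p) * ((t/2)^(1/p) * (c:ℝ))^q) atTop atTop :=
          h5.const_mul_atTop (by positivity)
        exact h6.atTop_mul_const (by norm_num)
      obtain ⟨t0, ht0r, ht0pos⟩ :
          ∃ t0 : ℝ, (r:ℝ) ≤ (q/p) * ((t0/2)^(1/p) * (c:ℝ))^q * (1/2) ∧ 0 < t0 :=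
        ((hE.eventually_ge_atTop (r:ℝ)).and (eventually_gt_atTop 0)).exists
      calc (r : ℝ≥0∞) = ENNReal.ofReal (r:ℝ) := ENNReal.ofReal_coe_nnreal.symm
        _ ≤ ENNReal.ofReal ((q/p) * ((t0/2)^(1/p) * (c:ℝ))^q * (1/2)) :=
            ENNReal.ofReal_le_ofReal ht0r
        _ ≤ lorentzQ μ g p q := key μ g hp hq hc ht0pos (by rw [← hAdef, htop']; exact ENNReal.ofReal_lt_top)
    have hNtop : lorentzNorm μ g p q = ⊤ := by
      rw [lorentzNorm, hQtop, ENNReal.top_rpow_of_pos (by positivity)]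
    exact absurd hfin (by simp [hNtop])
  refine ⟨A, hAmeas, hApos, hAfin, ?_⟩
  by_contra hL
  have hLpos : 0 < Filter.liminf (fun n : ℕ => μ ((τ^[n]) ⁻¹' A)) Filter.atTop :=
    pos_iff_ne_zero.2 hL
  obtain ⟨t0, -, ht0pos, ht0lt⟩ := ENNReal.lt_iff_exists_real_btwn.1 hLpos
  have ht0' : (0:ℝ) < t0 := ENNReal.ofReal_pos.1 ht0pos
  have hev : ∀ᶠ n in atTop, ENNReal.ofReal t0 < μ ((τ^[n]) ⁻¹' A) :=
    eventually_lt_of_lt_liminf ht0lt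
  set ε0 : ℝ≥0∞ := ENNReal.ofReal ((q/p) * ((t0/2)^(1/p) * (c:ℝ))^q * (1/2)) with hε0
  have hεpos : 0 < ε0 := ENNReal.ofReal_pos.2 (by positivity)
  have hevN : ∀ᶠ n in atTop, ε0 ^ (1/q) ≤ lorentzNorm μ (g ∘ τ^[n]) p q := by
    filter_upwards [hev] with n hn
    have hAeq : (τ^[n]) ⁻¹' A = {x | (c : ℝ≥0∞) < (‖(g ∘ τ^[n]) x‖₊ : ℝ≥0∞)} := rfl
    have hkey := key μ (g ∘ τ^[n]) hp hq hc ht0' (by rw [← hAeq]; exact hn)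
    exact ENNReal.rpow_le_rpow hkey (by positivity)
  have hlim : ε0 ^ (1/q) ≤ Filter.liminf (fun n : ℕ => lorentzNorm μ (g ∘ τ^[n]) p q) atTop :=
    le_liminf_of_le (by isBoundedDefault) hevN
  rw [h0] at hlim
  exact lt_irrefl (0:ℝ≥0∞) (lt_of_lt_of_le (ENNReal.rpow_pos hεpos ENNReal.ofReal_ne_top) hlim)
end
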